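/- arXiv:2112.09218 — 11 statements merged into one kernel-verified Lean document; each statement's English description precedes it below -/
import Mathlib

section
/- Every refinement monoid is atom-cancellative: if M is a commutative refinement monoid, a ∈ M is an atom, and a + m = a + m' for m, m' ∈ M, then m = m'. -/
/-- Every refinement monoid is atom-cancellative. -/
theorem refinement_atom_cancellative {M : Type*} [AddCommMonoid M]
    (hrefine : ∀ a b c d : M, a + b = c + d →
      ∃ e1 e2 e3 e4 : M, a = e1 + e2 ∧ b = e3 + e4 ∧ c = e1 + e3 ∧ d = e2 + e4)
    (a : M) (ha0 : a ≠ 0) (hatom : ∀ b c : M, a = b + c → b = 0 ∨ c = 0)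
    (m m' : M) (h : a + m = a + m') : m = m' := by
  obtain ⟨e1, e2, e3, e4, h1, h2, h3, h4⟩ := hrefine a m a m' h
  rcases hatom e1 e2 h1 with he1 | he2
  · subst he1
    rw [zero_add] at h1 h3
    rw [h2, h4, ← h1, ← h3]
  · rcases hatom e1 e3 h3 with he1 | he3
    · subst he1
      rw [zero_add] at h1 h3
      rw [h2, h4, ← h1, ← h3]
    · subst he2; subst he3
      rw [h2, h4]
end

section
/- A finite, conical, refinement commutative monoid has no atoms. -/
/-- A finite, conical, refinement commutative monoid has no atoms. -/
theorem finite_conical_refinement_no_atoms {M : Type*} [AddCommMonoid M] [Finite M]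
    (hconical : ∀ a b : M, a + b = 0 → a = 0 ∧ b = 0)
    (hrefine : ∀ a b c d : M, a + b = c + d →
      ∃ e1 e2 e3 e4 : M, a = e1 + e2 ∧ b = e3 + e4 ∧ c = e1 + e3 ∧ d = e2 + e4) :
    ¬ ∃ a : M, a ≠ 0 ∧ ∀ b c : M, a = b + c → b = 0 ∨ c = 0 := by
  rintro ⟨a, ha0, hatom⟩
  -- atoms are cancellable
  have hcancel : ∀ x y : M, a + x = a + y → x = y := by
    intro x y hxy
    obtain ⟨e1, e2, e3, e4, h1, h2, h3, h4⟩ := hrefine a x a y hxy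
    rcases hatom e1 e2 h1 with h | h
    · -- e1 = 0, so a = e2 and a = e3
      subst h
      rw [zero_add] at h1 h3
      rw [h2, h4, ← h3, ← h1]
    · -- e2 = 0, so a = e1 and a = a + e3
      subst h
      rw [add_zero] at h1
      rw [zero_add] at h4
      subst h1
      rcases hatom a e3 h3 with h | h
      · exact absurd h ha0
      · subst h
        rw [zero_add] at h2
        rw [h2, h4]
  -- finiteness: n • a = (n+p) • a for some n ≥ 1, p ≥ 1
  obtain ⟨m, n, hmn, heq⟩ :=
    Finite.exists_ne_map_eq_of_infinite (fun k : ℕ => (k + 1) • a)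
  wlog hlt : m < n generalizing m n
  · exact this n m hmn.symm heq.symm (by omega)
  set p := n - m with hp
  have hp1 : 1 ≤ p := by omega
  have hn : n + 1 = (m + 1) + p := by omega
  have heq2 : (m + 1) • a = (m + 1) • a + p • a := by
    rw [← add_smul, ← hn]; exact heq
  -- cancel down: a = a + p • a
  have key : ∀ k : ℕ, (k + 1) • a = (k + 1) • a + p • a → a = a + p • a := by
    intro k
    induction k with
    | zero => intro h; simpa using h
    | succ j ih =>
      intro h
      apply ih
      have e : (j + 1 + 1) • a = a + (j + 1) • a := by
        rw [add_smul, one_smul, add_comm]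
      have : a + ((j + 1) • a) = a + ((j + 1) • a + p • a) := by
        rw [← add_assoc, ← e]; exact h
      exact hcancel _ _ this
  have haa : a = a + p • a := key m heq2
  have hpa : p • a ≠ 0 := by
    intro h
    obtain ⟨q, hq⟩ : ∃ q, p = q + 1 := ⟨p - 1, by omega⟩
    rw [hq, add_smul, one_smul] at h
    exact ha0 (hconical _ _ h).2
  rcases hatom a (p • a) haa with h | h
  · exact ha0 h
  · exact hpa h
end

section
/- For a finite commutative monoid M, the smallest ideal I of M (which equals the intersection of all sets a + M for a ∈ M, equivalently the set H(M) = {a ∈ M : a ≥ b for all b ∈ M} under the algebraic preorder) is a group, and it is isomorphic to the group completion (Grothendieck group) of M. -/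
/-- For a finite commutative monoid `M`, the smallest ideal
`H(M) = {x | x ≥ b for all b}` (under the algebraic preorder) is a group, and the map
`m ↦ z + m` (with `z` the identity of this group) is the group completion of `M`;
i.e. `H(M)` is isomorphic to the Grothendieck group of `M`, expressed via the
universal property of the group completion. -/
theorem smallest_ideal_is_group_completion {M : Type*} [AddCommMonoid M] [Finite M] :
    ∃ z ∈ {x : M | ∀ b : M, ∃ c : M, x = b + c},
      (∀ x ∈ {x : M | ∀ b : M, ∃ c : M, x = b + c},
        ∀ y ∈ {x : M | ∀ b : M, ∃ c : M, x = b + c},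
          x + y ∈ {x : M | ∀ b : M, ∃ c : M, x = b + c}) ∧
      (∀ x ∈ {x : M | ∀ b : M, ∃ c : M, x = b + c}, z + x = x) ∧
      (∀ x ∈ {x : M | ∀ b : M, ∃ c : M, x = b + c},
        ∃ y ∈ {x : M | ∀ b : M, ∃ c : M, x = b + c}, x + y = z) ∧
      ∀ (G : Type) (_ : AddCommGroup G) (ψ : M →+ G),
        ∃ χ : M → G,
          ((∀ x ∈ {x : M | ∀ b : M, ∃ c : M, x = b + c},
              ∀ y ∈ {x : M | ∀ b : M, ∃ c : M, x = b + c}, χ (x + y) = χ x + χ y) ∧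
            ∀ m : M, χ (z + m) = ψ m) ∧
          ∀ χ' : M → G,
            ((∀ x ∈ {x : M | ∀ b : M, ∃ c : M, x = b + c},
                ∀ y ∈ {x : M | ∀ b : M, ∃ c : M, x = b + c}, χ' (x + y) = χ' x + χ' y) ∧
              ∀ m : M, χ' (z + m) = ψ m) →
            ∀ x ∈ {x : M | ∀ b : M, ∃ c : M, x = b + c}, χ' x = χ x := by
  classical
  have : Fintype M := Fintype.ofFinite M
  set s : M := ∑ b : M, b with hs_def
  have hsH : ∀ b : M, ∃ c : M, s = b + c := by
    intro b
    refine ⟨∑ x ∈ Finset.univ.erase b, x, ?_⟩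
    rw [hs_def, ← Finset.add_sum_erase _ (fun x => x) (Finset.mem_univ b)]
  -- find i < j with i • s = j • s
  obtain ⟨i, j, hij, hlt⟩ : ∃ i j : ℕ, i • s = j • s ∧ i < j := by
    obtain ⟨a, b, hab, h⟩ := Finite.exists_ne_map_eq_of_infinite (fun n : ℕ => n • s)
    rcases lt_or_gt_of_ne hab with h' | h'
    · exact ⟨a, b, h, h'⟩
    · exact ⟨b, a, h.symm, h'⟩
  set d : ℕ := j - i with hd_def
  have hd : 0 < d := Nat.sub_pos_of_lt hlt
  have step : ∀ n : ℕ, i ≤ n → (n + d) • s = n • s := by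
    intro n hn
    have : n + d = (n - i) + j := by omega
    rw [this, add_nsmul, ← hij, ← add_nsmul]
    congr 1
    omega
  have steps : ∀ k n : ℕ, i ≤ n → (n + k * d) • s = n • s := by
    intro k
    induction k with
    | zero => simp
    | succ k ih =>
      intro n hn
      have h1 : n + (k + 1) * d = (n + k * d) + d := by ring
      rw [h1, step _ (by omega), ih n hn]
  set N : ℕ := (i + 1) * d with hN_def
  have hiN : i + 1 ≤ N := by
    calc i + 1 = (i + 1) * 1 := by ring
    _ ≤ (i + 1) * d := Nat.mul_le_mul_left _ hd
  have hN1 : 1 ≤ N := by omega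
  set e : M := N • s with he_def
  have hee : e + e = e := by
    rw [he_def, ← add_nsmul]
    have h2 : N + N = N + (i + 1) * d := by rw [hN_def]
    rw [h2, steps (i + 1) N (by omega)]
  -- e is in H
  have heH : ∀ b : M, ∃ c : M, e = b + c := by
    intro b
    obtain ⟨c, hc⟩ := hsH b
    obtain ⟨N', hN'⟩ : ∃ N', N = N' + 1 := ⟨N - 1, by omega⟩
    refine ⟨N' • s + c, ?_⟩
    calc e = N' • s + s := by rw [he_def, hN', succ_nsmul]
    _ = N' • s + (b + c) := by rw [← hc]
    _ = b + (N' • s + c) := by abel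
  -- e is an identity on H
  have hid : ∀ x ∈ {x : M | ∀ b : M, ∃ c : M, x = b + c}, e + x = x := by
    intro x hx
    obtain ⟨c, hc⟩ := hx e
    rw [hc, ← add_assoc, hee]
  refine ⟨e, heH, ?_, hid, ?_, ?_⟩
  · -- closure
    intro x hx y _ b
    obtain ⟨c, hc⟩ := hx b
    exact ⟨c + y, by rw [hc, add_assoc]⟩
  · -- inverses
    intro x hx
    obtain ⟨c, hc⟩ := heH x
    refine ⟨e + c, ?_, ?_⟩
    · intro b
      obtain ⟨c', hc'⟩ := heH b
      exact ⟨c' + c, by rw [hc', add_assoc]⟩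
    · calc x + (e + c) = (x + c) + e := by abel
      _ = e + e := by rw [← hc]
      _ = e := hee
  · -- universal property
    intro G hG ψ
    have hψe : ψ e = 0 := by
      have h := map_add ψ e e
      rw [hee] at h
      exact (add_eq_left.mp h.symm)
    refine ⟨⇑ψ, ⟨fun x _ y _ => map_add ψ x y,
      fun m => by rw [map_add, hψe, zero_add]⟩, ?_⟩
    rintro χ' ⟨-, hχ'⟩ x hx
    calc χ' x = χ' (e + x) := by rw [hid x hx]
    _ = ψ x := hχ' x
end

section
/- For positive integers n ≥ 2 and k ≥ 1, the monoid M_{n,n+k} is not a refinement monoid. Specifically, the equation x + (n−1)x = x + (n+k−1)x holds but admits no refinement. -/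
/-- The congruence on `ℕ` defining `M_{n,n+k}`: `a ~ b` iff `a = b`, or both
`a, b ≥ n` and `a ≡ b (mod k)`. -/
def mnkSetoid (n k : ℕ) : Setoid ℕ where
  r a b := a = b ∨ (n ≤ a ∧ n ≤ b ∧ a % k = b % k)
  iseqv := by
    refine ⟨fun a => Or.inl rfl, ?_, ?_⟩
    · intro a b h; rcases h with h | h
      · exact Or.inl h.symm
      · exact Or.inr ⟨h.2.1, h.1, h.2.2.symm⟩
    · intro a b c h1 h2
      rcases h1 with h1 | h1 <;> rcases h2 with h2 | h2
      · exact Or.inl (h1.trans h2)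
      · subst h1; exact Or.inr h2
      · subst h2; exact Or.inr h1
      · exact Or.inr ⟨h1.1, h2.2.1, h1.2.2.trans h2.2.2⟩

/-- The monoid `M_{n,n+k}` generated by `x` with relation `(n+k)x = nx`,
realised as `ℕ` modulo the above congruence; the element `i • x` corresponds to
the class of `i`. -/
def Mnk (n k : ℕ) : Type := Quotient (mnkSetoid n k)

/-- The class of `i : ℕ` in `M_{n,n+k}`, i.e. the element `i • x`. -/
def Mnk.mk (n k : ℕ) (i : ℕ) : Mnk n k := Quotient.mk (mnkSetoid n k) i

/-- Addition on `M_{n,n+k}`, induced from addition on `ℕ`. -/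
def Mnk.add (n k : ℕ) : Mnk n k → Mnk n k → Mnk n k :=
  Quotient.map₂ (· + ·) (by
    intro a a' ha b b' hb
    try dsimp only
    rcases ha with ha | ha <;> rcases hb with hb | hb
    · exact Or.inl (by omega)
    · subst ha; exact Or.inr ⟨by omega, by omega, Nat.ModEq.add_left a hb.2.2⟩
    · subst hb; exact Or.inr ⟨by omega, by omega, Nat.ModEq.add_right b ha.2.2⟩
    · exact Or.inr ⟨by omega, by omega, Nat.ModEq.add ha.2.2 hb.2.2⟩)

/-- For `n ≥ 2`, `k ≥ 1`, the monoid `M_{n,n+k}` is not a refinement monoid: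
the equation `x + (n−1)x = x + (n+k−1)x` holds but admits no refinement. -/
theorem Mnk.not_refinement (n k : ℕ) (hn : 2 ≤ n) (hk : 1 ≤ k) :
    Mnk.add n k (Mnk.mk n k 1) (Mnk.mk n k (n - 1)) =
      Mnk.add n k (Mnk.mk n k 1) (Mnk.mk n k (n + k - 1)) ∧
    ¬ ∃ e1 e2 e3 e4 : Mnk n k,
        Mnk.mk n k 1 = Mnk.add n k e1 e2 ∧
        Mnk.mk n k (n - 1) = Mnk.add n k e3 e4 ∧
        Mnk.mk n k 1 = Mnk.add n k e1 e3 ∧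
        Mnk.mk n k (n + k - 1) = Mnk.add n k e2 e4 := by
  constructor
  · apply Quotient.sound
    refine Or.inr ⟨?_, ?_, ?_⟩ <;> beta_reduce
    · omega
    · omega
    · have e1 : 1 + (n - 1) = n := by omega
      have e2 : 1 + (n + k - 1) = n + k := by omega
      rw [e1, e2, Nat.add_mod_right]
  · rintro ⟨e1, e2, e3, e4, h1, h2, h3, h4⟩
    obtain ⟨a1, rfl⟩ := Quotient.exists_rep e1
    obtain ⟨a2, rfl⟩ := Quotient.exists_rep e2
    obtain ⟨a3, rfl⟩ := Quotient.exists_rep e3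
    obtain ⟨a4, rfl⟩ := Quotient.exists_rep e4
    have g1 := Quotient.exact h1
    have g2 := Quotient.exact h2
    have g3 := Quotient.exact h3
    have g4 := Quotient.exact h4
    beta_reduce at g1 g2 g3 g4
    rcases g1 with g1 | g1 <;> rcases g2 with g2 | g2 <;>
      rcases g3 with g3 | g3 <;> rcases g4 with g4 | g4 <;> omega
end

section
/- For positive integers n, k, the group completion of M_{n,n+k} is a cyclic group of order k, and it is isomorphic (as a monoid) to the subset {nx, (n+1)x, …, (n+k−1)x} of M_{n,n+k}. -/
lemma Mnk.add_mk (n k a b : ℕ) :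
    Mnk.add n k (Mnk.mk n k a) (Mnk.mk n k b) = Mnk.mk n k (a + b) := rfl

lemma Mnk.mk_eq_of (n k a b : ℕ) (ha : n ≤ a) (hb : n ≤ b) (h : a % k = b % k) :
    Mnk.mk n k a = Mnk.mk n k b :=
  Quotient.sound (Or.inr ⟨ha, hb, h⟩)

lemma Mnk.mk_exact {n k a b : ℕ} (h : Mnk.mk n k a = Mnk.mk n k b) :
    a = b ∨ (n ≤ a ∧ n ≤ b ∧ a % k = b % k) :=
  Quotient.exact h


/-- The group completion of `M_{n,n+k}` is a cyclic group of order `k`,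
isomorphic as a monoid to the subset `{nx, …, (n+k−1)x}` of `M_{n,n+k}`:
there is an injective additive map `f` from `ZMod k` (the cyclic group of
order `k`) onto that subset, and an additive map `φ : M_{n,n+k} → ZMod k`
satisfying the universal property of the group completion. -/
theorem Mnk.groupCompletion (n k : ℕ) (hn : 0 < n) (hk : 0 < k) :
    ∃ f : ZMod k → Mnk n k,
      Function.Injective f ∧
      (∀ a b : ZMod k, f (a + b) = Mnk.add n k (f a) (f b)) ∧
      Set.range f = {x : Mnk n k | ∃ i : ℕ, n ≤ i ∧ i ≤ n + k - 1 ∧ x = Mnk.mk n k i} ∧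
      ∃ φ : Mnk n k → ZMod k,
        (∀ a b : Mnk n k, φ (Mnk.add n k a b) = φ a + φ b) ∧
        ∀ (G : Type) (_ : AddCommGroup G) (ψ : Mnk n k → G),
          (∀ a b : Mnk n k, ψ (Mnk.add n k a b) = ψ a + ψ b) →
          ∃! h : ZMod k →+ G, ∀ m : Mnk n k, h (φ m) = ψ m := by
  haveI : NeZero k := ⟨hk.ne'⟩
  refine ⟨fun a => Mnk.mk n k (a.val + n * k), ?_, ?_, ?_, ?_⟩
  · -- injectivity
    intro a b h
    rcases Mnk.mk_exact h with h | h
    · exact ZMod.val_injective k (by omega)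
    · have := h.2.2
      simp only [Nat.add_mul_mod_self_right] at this
      rw [Nat.mod_eq_of_lt (ZMod.val_lt a), Nat.mod_eq_of_lt (ZMod.val_lt b)] at this
      exact ZMod.val_injective k this
  · -- additivity
    intro a b
    rw [Mnk.add_mk]
    have hnk : n ≤ n * k := Nat.le_mul_of_pos_right n hk
    apply Mnk.mk_eq_of _ _ _ _ (by omega) (by omega)
    rw [ZMod.val_add]
    have hrhs : ZMod.val a + n * k + (ZMod.val b + n * k)
        = ZMod.val a + ZMod.val b + 2 * n * k := by ring
    rw [hrhs, Nat.add_mul_mod_self_right, Nat.add_mul_mod_self_right,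
      Nat.mod_mod_of_dvd _ (dvd_refl k)]
  · -- range
    ext x
    simp only [Set.mem_range, Set.mem_setOf_eq]
    constructor
    · rintro ⟨a, rfl⟩
      set m := a.val + n * k with hm
      have hnk : n ≤ n * k := Nat.le_mul_of_pos_right n hk
      refine ⟨n + (m - n) % k, by omega, ?_, ?_⟩
      · have := Nat.mod_lt (m - n) hk; omega
      · apply Mnk.mk_eq_of _ _ _ _ (by omega) (by omega)
        have h1 : (n + (m - n) % k) % k = (n + (m - n)) % k :=
          Nat.ModEq.add_left n (Nat.mod_modEq (m - n) k)
        have h2 : n + (m - n) = m := by omega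
        rw [h1, h2]
    · rintro ⟨i, hi1, hi2, rfl⟩
      refine ⟨(i : ZMod k), ?_⟩
      have hnk : n ≤ n * k := Nat.le_mul_of_pos_right n hk
      apply Mnk.mk_eq_of _ _ _ _ (by omega) hi1
      rw [ZMod.val_natCast, Nat.add_mul_mod_self_right,
        Nat.mod_mod_of_dvd _ (dvd_refl k)]
  · -- universal property
    refine ⟨Quotient.lift (fun i : ℕ => (i : ZMod k)) ?_, ?_, ?_⟩
    · intro a b hab
      rcases hab with h | h
      · exact congrArg _ h
      · exact (ZMod.natCast_eq_natCast_iff a b k).mpr h.2.2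
    · intro a b
      induction a using Quotient.ind
      induction b using Quotient.ind
      rename_i a b
      show ((a + b : ℕ) : ZMod k) = (a : ZMod k) + (b : ZMod k)
      push_cast; ring
    · intro G instG ψ hψ
      set g : G := ψ (Mnk.mk n k 1) with hg
      have hzero : ψ (Mnk.mk n k 0) = 0 := by
        have := hψ (Mnk.mk n k 0) (Mnk.mk n k 0)
        rw [Mnk.add_mk] at this
        simpa using this
      have hsmul : ∀ i : ℕ, ψ (Mnk.mk n k i) = i • g := by
        intro i
        induction i with
        | zero => simpa using hzero
        | succ i ih =>
          have := hψ (Mnk.mk n k i) (Mnk.mk n k 1)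
          rw [Mnk.add_mk] at this
          rw [this, ih, succ_nsmul]
      have hkg : k • g = 0 := by
        have h1 : Mnk.mk n k (n + k) = Mnk.mk n k n :=
          Mnk.mk_eq_of _ _ _ _ (by omega) le_rfl (Nat.add_mod_right n k)
        have h2 := congrArg ψ h1
        rw [hsmul, hsmul, add_nsmul] at h2
        exact add_left_cancel (a := n • g) (h2.trans (add_zero _).symm)
      have hkgz : (zmultiplesHom G g) (k : ℤ) = 0 := by
        simp only [zmultiplesHom_apply, natCast_zsmul]
        exact hkg
      set h : ZMod k →+ G := ZMod.lift k ⟨zmultiplesHom G g, hkgz⟩ with hh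
      have hmain : ∀ m : Mnk n k,
          h (Quotient.lift (fun i : ℕ => (i : ZMod k)) (by
            intro a b hab
            rcases hab with h | h
            · exact congrArg _ h
            · exact (ZMod.natCast_eq_natCast_iff a b k).mpr h.2.2) m) = ψ m := by
        intro m
        induction m using Quotient.ind
        rename_i i
        show h ((i : ℕ) : ZMod k) = ψ (Mnk.mk n k i)
        have hcast : ((i : ℕ) : ZMod k) = ((i : ℤ) : ZMod k) := by push_cast; rfl
        rw [hcast, hh, ZMod.lift_coe]
        rw [hsmul i]
        simp [zmultiplesHom_apply, natCast_zsmul]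
      refine ⟨h, hmain, ?_⟩
      intro h' hh'
      ext z
      have hz : ((z.val : ℕ) : ZMod k) = z := ZMod.natCast_rightInverse z
      calc h' z = h' (((z.val : ℕ) : ZMod k)) := by rw [hz]
        _ = ψ (Mnk.mk n k z.val) := hh' (Mnk.mk n k z.val)
        _ = h (((z.val : ℕ) : ZMod k)) := (hmain (Mnk.mk n k z.val)).symm
        _ = h z := by rw [hz]
end

section
/- For positive integers n ≥ 1 and k ≥ 1, the identity element of the group {nx, …, (n+k−1)x} inside M_{n,n+k} is tx, where t is the unique multiple of k in the integer interval [n, n+k−1], and (t+1)x generates this cyclic group of order k. -/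
/-- The identity element of the group `{nx, …, (n+k−1)x}` inside `M_{n,n+k}` is
`tx`, where `t` is the unique multiple of `k` in `[n, n+k−1]`, and `(t+1)x`
generates this cyclic group of order `k`. -/
theorem Mnk.identity_and_generator (n k : ℕ) (hn : 1 ≤ n) (hk : 1 ≤ k) :
    ∃ t : ℕ, n ≤ t ∧ t ≤ n + k - 1 ∧ k ∣ t ∧
      (∀ t' : ℕ, n ≤ t' → t' ≤ n + k - 1 → k ∣ t' → t' = t) ∧
      (∀ x ∈ {x : Mnk n k | ∃ i : ℕ, n ≤ i ∧ i ≤ n + k - 1 ∧ x = Mnk.mk n k i},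
        Mnk.add n k (Mnk.mk n k t) x = x) ∧
      (∀ x ∈ {x : Mnk n k | ∃ i : ℕ, n ≤ i ∧ i ≤ n + k - 1 ∧ x = Mnk.mk n k i},
        ∃ m : ℕ, 1 ≤ m ∧ m ≤ k ∧ x = Mnk.mk n k (m * (t + 1))) := by

  have hdm := Nat.div_add_mod (n + k - 1) k
  have hr : (n + k - 1) % k < k := Nat.mod_lt _ hk
  set q := (n + k - 1) / k with hq
  refine ⟨k * q, by omega, by omega, ⟨q, rfl⟩, ?_, ?_, ?_⟩
  · rintro t' h1 h2 ⟨a, rfl⟩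
    have ha : k * a < k * (q + 1) := by rw [Nat.mul_add, Nat.mul_one]; omega
    have hb : k * q < k * (a + 1) := by rw [Nat.mul_add, Nat.mul_one]; omega
    have h3 : a < q + 1 := Nat.lt_of_mul_lt_mul_left ha
    have h4 : q < a + 1 := Nat.lt_of_mul_lt_mul_left hb
    have : a = q := by omega
    rw [this]
  · rintro x ⟨i, hi1, hi2, rfl⟩
    show Mnk.mk n k (k * q + i) = Mnk.mk n k i
    exact Quotient.sound (Or.inr ⟨by omega, hi1, Nat.mul_add_mod k q i⟩)
  · rintro x ⟨i, hi1, hi2, rfl⟩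
    set m := if i % k = 0 then k else i % k with hm
    have hm1 : 1 ≤ m := by
      rw [hm]; split <;> omega
    have hm2 : m ≤ k := by
      have := Nat.mod_lt i hk
      rw [hm]; split <;> omega
    have hmod : m % k = i % k := by
      rw [hm]; split
      · simp_all [Nat.mod_self]
      · exact Nat.mod_eq_of_lt (Nat.mod_lt i hk)
    refine ⟨m, hm1, hm2, ?_⟩
    have hrw : m * (k * q + 1) = k * (m * q) + m := by ring
    have hge : k * q + 1 ≤ m * (k * q + 1) := Nat.le_mul_of_pos_left _ hm1
    refine Quotient.sound (Or.inr ⟨hi1, by omega, ?_⟩)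
    rw [hrw, Nat.mul_add_mod, hmod]
end

section
/- Confluence Lemma: Let (E, w) be a row-finite weighted graph, F_E the free commutative monoid on E⁰, and for each vertex v with weight w(v) define a one-step reduction →₁ replacing w(v)·v by the sum of r(e) over e ∈ s⁻¹(v) (when at least w(v) copies of v are present); let → be its reflexive transitive closure and ∼ the congruence it generates. Then for a, b ∈ F_E, a ∼ b if and only if there exists c ∈ F_E with a → c and b → c. -/
/-! Weighted graphs `(E,w)`: a directed graph with vertex set `V`, edge set `E`,
source and range maps `s r : E → V`, and weight `w : E¹ → ℕ⁺`.  The free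
commutative monoid on the vertices is `V →₀ ℕ`. -/

/-- The vertex weight `w(v) = max{w(e) : e ∈ s⁻¹(v)}` for regular vertices,
and `w(v) = 1` for sinks, for a row-finite weighted graph. -/
noncomputable def wVert {V E : Type} (s : E → V) (h : ∀ v : V, {e : E | s e = v}.Finite)
    (w : E → ℕ) (v : V) : ℕ :=
  max 1 (((h v).toFinset).sup w)

/-- The `r`-transform: `r(w(v)v) = Σ_{e ∈ s⁻¹(v)} r(e)`, as an element of the
free commutative monoid `V →₀ ℕ` on the vertices. -/
noncomputable def rTrans {V E : Type} [DecidableEq V] (s r : E → V)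
    (h : ∀ v : V, {e : E | s e = v}.Finite) (v : V) : V →₀ ℕ :=
  ∑ e ∈ (h v).toFinset, Finsupp.single (r e) 1

/-- The one-step reduction `→₁` on the free commutative monoid `V →₀ ℕ`:
replace `w(v)·v` (when present) by `Σ_{e ∈ s⁻¹(v)} r(e)`. -/
noncomputable def wStep {V E : Type} [DecidableEq V] (s r : E → V)
    (h : ∀ v : V, {e : E | s e = v}.Finite) (w : E → ℕ) (a b : V →₀ ℕ) : Prop :=
  ∃ (v : V) (c : V →₀ ℕ),
    a = c + Finsupp.single v (wVert s h w v) ∧ b = c + rTrans s r h v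

lemma exch {V : Type} [DecidableEq V] {v v' : V} (hvv : v ≠ v') {n n' : ℕ} {c c' : V →₀ ℕ}
    (hcc : c + Finsupp.single v n = c' + Finsupp.single v' n') :
    ∃ d : V →₀ ℕ, c = d + Finsupp.single v' n' ∧ c' = d + Finsupp.single v n := by
  have hle : Finsupp.single v' n' ≤ c := by
    rw [Finsupp.single_le_iff]
    have := DFunLike.congr_fun hcc v'
    simp [Finsupp.single_apply, hvv] at this
    omega
  refine ⟨c - Finsupp.single v' n', (tsub_add_cancel_of_le hle).symm, ?_⟩
  ext u
  have := DFunLike.congr_fun hcc u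
  simp only [Finsupp.add_apply, Finsupp.coe_tsub, Pi.sub_apply,
    Finsupp.single_apply] at this ⊢
  have hc : n' ≤ c v' := Finsupp.single_le_iff.mp hle
  by_cases h1 : v = u <;> by_cases h2 : v' = u
  · exact absurd (h1.trans h2.symm) hvv
  · subst h1; simp [h2] at this ⊢; omega
  · subst h2; simp [h1] at this ⊢; omega
  · simp [h1, h2] at this ⊢; omega

lemma wStep_diamond {V E : Type} [DecidableEq V] (s r : E → V)
    (h : ∀ v : V, {e : E | s e = v}.Finite) (w : E → ℕ) :
    ∀ a b c, wStep s r h w a b → wStep s r h w a c →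
      ∃ d, Relation.ReflGen (wStep s r h w) b d ∧
        Relation.ReflTransGen (wStep s r h w) c d := by
  rintro a b c ⟨v, cb, rfl, rfl⟩ ⟨v', cc, hac, rfl⟩
  by_cases hvv : v = v'
  · subst hvv
    have : cb = cc := add_right_cancel hac
    subst this
    exact ⟨cb + rTrans s r h v, Relation.ReflGen.refl, Relation.ReflTransGen.refl⟩
  · obtain ⟨d, hd1, hd2⟩ := exch hvv hac
    refine ⟨d + rTrans s r h v + rTrans s r h v', ?_, ?_⟩
    · exact Relation.ReflGen.single ⟨v', d + rTrans s r h v, by rw [hd1]; abel, rfl⟩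
    · refine Relation.ReflTransGen.single ⟨v, d + rTrans s r h v', by rw [hd2]; abel, by abel⟩

/-- **The Confluence Lemma.**  For a row-finite weighted graph `(E,w)`, two
elements of the free commutative monoid on the vertices are congruent modulo
the defining relations of the graph monoid `M(E,w)` (i.e. under the congruence
`∼` generated by the one-step reduction `→₁`) if and only if they have a common
reduct under the reflexive–transitive closure `→` of `→₁`. -/
theorem confluence_lemma {V E : Type} [DecidableEq V] (s r : E → V)
    (h : ∀ v : V, {e : E | s e = v}.Finite) (w : E → ℕ) (hw : ∀ e : E, 0 < w e)
    (a b : V →₀ ℕ) :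
    Relation.EqvGen (wStep s r h w) a b ↔
      ∃ c : V →₀ ℕ, Relation.ReflTransGen (wStep s r h w) a c ∧
        Relation.ReflTransGen (wStep s r h w) b c := by
  have heq := Relation.equivalence_join_reflTransGen (wStep_diamond s r h w)
  constructor
  · intro hab
    induction hab with
    | rel x y hxy => exact ⟨y, Relation.ReflTransGen.single hxy, Relation.ReflTransGen.refl⟩
    | refl x => exact ⟨x, Relation.ReflTransGen.refl, Relation.ReflTransGen.refl⟩
    | symm x y _ ih => exact heq.symm ih
    | trans x y z _ _ ih1 ih2 => exact heq.trans ih1 ih2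
  · rintro ⟨c, hac, hbc⟩
    have key : ∀ x y : V →₀ ℕ, Relation.ReflTransGen (wStep s r h w) x y →
        Relation.EqvGen (wStep s r h w) x y := by
      intro x y hxy
      induction hxy with
      | refl => exact Relation.EqvGen.refl x
      | tail _ hst ih => exact Relation.EqvGen.trans _ _ _ ih (Relation.EqvGen.rel _ _ hst)
    exact Relation.EqvGen.trans _ _ _ (key _ _ hac)
      (Relation.EqvGen.symm _ _ (key _ _ hbc))
end

section
/- Let (E, w) be a finite weighted graph and S the set of vertices of E that do not connect to any cycle. Then the unit group Z(M(E,w)) of the graph monoid M(E,w) equals the submonoid M(S, w). -/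
/-- The out-neighbourhood sum `Σ_{e ∈ s⁻¹(v)} r(e)` in the free commutative
monoid `V →₀ ℕ`, for a graph with finitely many edges. -/
noncomputable def frTrans {V E : Type} [Fintype E] [DecidableEq V] (s r : E → V) (v : V) : V →₀ ℕ :=
  ∑ e ∈ Finset.univ.filter (fun e => s e = v), Finsupp.single (r e) 1

/-- The vertex weight: `w(v) = max{w(e) : e ∈ s⁻¹(v)}` for non-sinks and
`w(v) = 1` for sinks. -/
def fwVert {V E : Type} [Fintype E] [DecidableEq V] (s : E → V) (w : E → ℕ) (v : V) : ℕ :=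
  max 1 ((Finset.univ.filter (fun e => s e = v)).sup w)

/-- The defining relations of the graph monoid `M(E,w)`:
`w(v)·v = Σ_{e ∈ s⁻¹(v)} r(e)` for every vertex `v` (so sinks become `0`). -/
def gRel {V E : Type} [Fintype E] [DecidableEq V] (s r : E → V) (w : E → ℕ)
    (a b : V →₀ ℕ) : Prop :=
  ∃ v : V, a = Finsupp.single v (fwVert s w v) ∧ b = frTrans s r v

/-- The graph monoid `M(E,w)` of a finite weighted graph: the free commutative
monoid on the vertices modulo the congruence generated by the relations. -/
abbrev graphMonoid {V E : Type} [Fintype E] [DecidableEq V] (s r : E → V) (w : E → ℕ) :=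
  (addConGen (gRel s r w)).Quotient

/-- The class of `a : V →₀ ℕ` in the graph monoid `M(E,w)`. -/
noncomputable def gMk {V E : Type} [Fintype E] [DecidableEq V] (s r : E → V) (w : E → ℕ)
    (a : V →₀ ℕ) : graphMonoid s r w :=
  (addConGen (gRel s r w)).mk' a

/-- One vertex steps to another if there is an edge from the first to the second. -/
def eRel {V E : Type} (s r : E → V) (x y : V) : Prop := ∃ e : E, s e = x ∧ r e = y

/-- The set `S` of vertices which do not connect to any cycle. -/
def noCycleSet {V E : Type} (s r : E → V) : Set V :=
  {v : V | ¬ ∃ u : V, Relation.ReflTransGen (eRel s r) v u ∧ Relation.TransGen (eRel s r) u u}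

section Aux

variable {V E : Type} [Fintype V] [Fintype E] [DecidableEq V]

lemma gMk_rel (s r : E → V) (w : E → ℕ) (v : V) :
    gMk s r w (Finsupp.single v (fwVert s w v)) = gMk s r w (frTrans s r v) :=
  (AddCon.eq _).2 (AddConGen.Rel.of _ _ ⟨v, rfl, rfl⟩)

lemma noCycle_hered (s r : E → V) {u v : V} (hv : v ∈ noCycleSet s r)
    (h : eRel s r v u) : u ∈ noCycleSet s r := by
  rintro ⟨x, hx1, hx2⟩
  exact hv ⟨x, Relation.ReflTransGen.head h hx1, hx2⟩

lemma exists_bad_edge (s r : E → V) {v : V} (hv : v ∉ noCycleSet s r) :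
    ∃ e : E, s e = v ∧ r e ∉ noCycleSet s r := by
  simp only [noCycleSet, Set.mem_setOf_eq, not_not] at hv
  obtain ⟨u, hvu, hu⟩ := hv
  rcases Relation.ReflTransGen.cases_head hvu with heq | ⟨c, hvc, hcu⟩
  · subst heq
    obtain ⟨c, hvc, hcv⟩ := (Relation.TransGen.head'_iff).1 hu
    obtain ⟨e, he1, he2⟩ := hvc
    refine ⟨e, he1, fun hc => hc ⟨v, he2 ▸ hcv, hu⟩⟩
  · obtain ⟨e, he1, he2⟩ := hvc
    refine ⟨e, he1, fun hc => hc ⟨u, he2 ▸ hcu, hu⟩⟩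

/-- The step-down relation used for well-founded induction on `S`. -/
def stepRel (s r : E → V) (u v : V) : Prop := v ∈ noCycleSet s r ∧ eRel s r v u

lemma stepRel_wf [Fintype V] (s r : E → V) : WellFounded (stepRel s r) := by
  have irr : IsIrrefl V (Relation.TransGen (stepRel s r)) := by
    constructor
    intro a ha
    -- `a ∈ S` from the last step
    obtain ⟨c, -, hca⟩ := (Relation.TransGen.tail'_iff).1 ha
    have haS : a ∈ noCycleSet s r := hca.1
    -- a cycle through `a`
    have hcyc : Relation.TransGen (eRel s r) a a := by
      have := Relation.TransGen.mono (fun x y (h : stepRel s r x y) =>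
        (h.2 : Function.swap (eRel s r) x y)) _ _ ha
      exact (Relation.transGen_swap).1 this
    exact haS ⟨a, Relation.ReflTransGen.refl, hcyc⟩
  exact Subrelation.wf (fun h => Relation.TransGen.single h)
    (Finite.wellFounded_of_trans_of_irrefl _)

lemma gMk_add (s r : E → V) (w : E → ℕ) (a b : V →₀ ℕ) :
    gMk s r w (a + b) = gMk s r w a + gMk s r w b :=
  map_add ((addConGen (gRel s r w)).mk') a b

lemma gMk_nsmul (s r : E → V) (w : E → ℕ) (n : ℕ) (a : V →₀ ℕ) :
    gMk s r w (n • a) = n • gMk s r w a :=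
  map_nsmul ((addConGen (gRel s r w)).mk') n a

lemma sum_unit {M : Type} [AddCommMonoid M] {ι : Type} (F : Finset ι) (f : ι → M)
    (h : ∀ i ∈ F, ∃ y, f i + y = 0) : ∃ y, (∑ i ∈ F, f i) + y = 0 := by
  induction F using Finset.cons_induction with
  | empty => exact ⟨0, by simp⟩
  | cons a Fs hnot IH =>
    obtain ⟨y1, hy1⟩ := h _ (Finset.mem_cons_self _ _)
    obtain ⟨y2, hy2⟩ := IH (fun i hi => h i (Finset.mem_cons_of_mem hi))
    refine ⟨y1 + y2, ?_⟩
    rw [Finset.sum_cons, add_add_add_comm, hy1, hy2, add_zero]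

lemma single_unit (s r : E → V) (w : E → ℕ) (v : V) :
    v ∈ noCycleSet s r → ∃ y, gMk s r w (Finsupp.single v 1) + y = 0 := by
  induction v using WellFounded.induction (stepRel_wf s r) with
  | _ v IH =>
  intro hv
  have hFr : ∃ Y, gMk s r w (frTrans s r v) + Y = 0 := by
    have : gMk s r w (frTrans s r v)
        = ∑ e ∈ Finset.univ.filter (fun e => s e = v), gMk s r w (Finsupp.single (r e) 1) := by
      rw [frTrans]
      exact map_sum ((addConGen (gRel s r w)).mk') _ _
    rw [this]
    refine sum_unit _ _ (fun e he => ?_)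
    have hse : s e = v := by simpa using he
    have hstep : stepRel s r (r e) v := ⟨hv, ⟨e, hse, rfl⟩⟩
    exact IH (r e) hstep (noCycle_hered s r hv ⟨e, hse, rfl⟩)
  obtain ⟨Y, hY⟩ := hFr
  rw [← gMk_rel s r w v] at hY
  have h1 : fwVert s w v = 1 + (fwVert s w v - 1) := by
    have : 1 ≤ fwVert s w v := le_max_left _ _
    omega
  rw [h1, Finsupp.single_add, gMk_add] at hY
  exact ⟨gMk s r w (Finsupp.single v (fwVert s w v - 1)) + Y, by
    rw [← add_assoc]; exact hY⟩

lemma supported_unit (s r : E → V) (w : E → ℕ) (a : V →₀ ℕ)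
    (ha : ∀ v ∈ a.support, v ∈ noCycleSet s r) :
    ∃ y, gMk s r w a + y = 0 := by
  induction a using Finsupp.induction with
  | zero => exact ⟨0, by rw [add_zero]; exact map_zero ((addConGen (gRel s r w)).mk')⟩
  | single_add v b f hvf hb IH =>
    have hvS : v ∈ noCycleSet s r := by
      refine ha v ?_
      rw [Finsupp.mem_support_iff, Finsupp.add_apply, Finsupp.single_eq_same]
      have : f v = 0 := by simpa [Finsupp.mem_support_iff] using hvf
      simp [this, hb]
    have hfS : ∀ u ∈ f.support, u ∈ noCycleSet s r := by
      intro u hu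
      have huv : u ≠ v := fun h => hvf (h ▸ hu)
      refine ha u ?_
      rw [Finsupp.mem_support_iff, Finsupp.add_apply, Finsupp.single_eq_of_ne huv]
      simpa [Finsupp.mem_support_iff] using hu
    obtain ⟨y1, hy1⟩ := single_unit s r w v hvS
    obtain ⟨y2, hy2⟩ := IH hfS
    refine ⟨b • y1 + y2, ?_⟩
    have hsingle : Finsupp.single v b = b • Finsupp.single v 1 := by
      rw [Finsupp.smul_single, smul_eq_mul, mul_one]
    rw [gMk_add, hsingle, gMk_nsmul, add_add_add_comm, ← nsmul_add, hy1, hy2]; exact nsmul_zero b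

open Classical in
/-- The homomorphism detecting the support outside `S`. -/
noncomputable def phiF (s r : E → V) : (V →₀ ℕ) →+ ℕ∞ :=
  Finsupp.liftAddHom (fun v => if v ∈ noCycleSet s r then 0 else multiplesHom ℕ∞ ⊤)

lemma top_nsmul (n : ℕ) (h : n ≠ 0) : n • (⊤ : ℕ∞) = ⊤ := by
  rw [nsmul_eq_mul]; exact WithTop.mul_top (show (n : ℕ∞) ≠ 0 by exact_mod_cast h)

open Classical in
lemma phiF_single (s r : E → V) (v : V) (n : ℕ) :
    phiF s r (Finsupp.single v n) = if v ∈ noCycleSet s r then 0 else n • (⊤ : ℕ∞) := by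
  rw [phiF, Finsupp.liftAddHom_apply_single]
  split <;> simp [multiplesHom_apply]

lemma phiF_respects (s r : E → V) (w : E → ℕ) {a b : V →₀ ℕ} (h : gRel s r w a b) :
    phiF s r a = phiF s r b := by
  classical
  obtain ⟨v, rfl, rfl⟩ := h
  have hfr : phiF s r (frTrans s r v)
      = ∑ e ∈ Finset.univ.filter (fun e => s e = v), phiF s r (Finsupp.single (r e) 1) := by
    rw [frTrans]; exact map_sum _ _ _
  rw [phiF_single, hfr]
  by_cases hv : v ∈ noCycleSet s r
  · rw [if_pos hv]
    refine (Finset.sum_eq_zero fun e he => ?_).symm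
    have hse : s e = v := by simpa using he
    rw [phiF_single, if_pos (noCycle_hered s r hv ⟨e, hse, rfl⟩)]
  · rw [if_neg hv, top_nsmul _ (by have : 1 ≤ fwVert s w v := le_max_left _ _; omega)]
    obtain ⟨e, hse, hre⟩ := exists_bad_edge s r hv
    have he : e ∈ Finset.univ.filter (fun e => s e = v) := by simp [hse]
    have hterm : phiF s r (Finsupp.single (r e) 1) = ⊤ := by
      rw [phiF_single, if_neg hre, one_smul]
    refine (top_unique ?_).symm
    calc (⊤ : ℕ∞) = phiF s r (Finsupp.single (r e) 1) := hterm.symm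
      _ ≤ _ := Finset.single_le_sum (f := fun e => phiF s r (Finsupp.single (r e) 1)) (fun _ _ => zero_le) he

end Aux

/-- For a finite weighted graph `(E,w)` with `S` the set of vertices not
connecting to any cycle, the unit group `Z(M(E,w)) = {x | ∃ y, x + y = 0}` of
the graph monoid equals the submonoid `M(S,w)`, i.e. the set of classes of
elements of the free commutative monoid supported in `S`. -/
theorem unitGroup_eq_MS {V E : Type} [Fintype V] [Fintype E] [DecidableEq V]
    (s r : E → V) (w : E → ℕ) (hw : ∀ e : E, 0 < w e) :
    {x : graphMonoid s r w | ∃ y : graphMonoid s r w, x + y = 0} =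
      {x : graphMonoid s r w | ∃ a : V →₀ ℕ,
        (∀ v ∈ a.support, v ∈ noCycleSet s r) ∧ x = gMk s r w a} := by
  classical
  ext x
  simp only [Set.mem_setOf_eq]
  constructor
  · rintro ⟨y, hxy⟩
    obtain ⟨a, rfl⟩ := AddCon.mk'_surjective x
    obtain ⟨b, rfl⟩ := AddCon.mk'_surjective y
    set Φ : graphMonoid s r w →+ ℕ∞ :=
      (addConGen (gRel s r w)).lift (phiF s r)
        (AddCon.addConGen_le.2 fun a b h => (AddCon.ker_rel _).2 (phiF_respects s r w h)) with hΦdef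
    have hΦ : ∀ c : V →₀ ℕ, Φ ((addConGen (gRel s r w)).mk' c) = phiF s r c := by
      intro c
      exact AddCon.lift_mk' _ _
    have h0 : phiF s r a + phiF s r b = 0 := by
      rw [← hΦ a, ← hΦ b, ← map_add, hxy, map_zero]
    have ha0 : phiF s r a = 0 := (add_eq_zero.1 h0).1
    refine ⟨a, ?_, rfl⟩
    intro v hv
    by_contra hvS
    rw [phiF, Finsupp.liftAddHom_apply, Finsupp.sum] at ha0
    have hterm := (Finset.sum_eq_zero_iff).1 ha0 v hv
    rw [if_neg hvS, multiplesHom_apply,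
      top_nsmul _ (Finsupp.mem_support_iff.1 hv)] at hterm
    simp at hterm
  · rintro ⟨a, ha, rfl⟩
    exact supported_unit s r w a ha
end

section
/- Let (E, w) be a finite weighted graph and S the set of vertices not connecting to any cycle. Then M(E,w) is conical if and only if every non-sink vertex in S has weight one. -/
set_option linter.unusedSectionVars false

namespace GMAux

open Finsupp Relation

variable {V E : Type} [Fintype V] [Fintype E] [DecidableEq V] (s r : E → V) (w : E → ℕ)

lemma one_le_fwVert (v : V) : 1 ≤ fwVert s w v := le_max_left _ _

lemma step_mem {u x : V} (hu : u ∈ noCycleSet s r) (h : eRel s r u x) : x ∈ noCycleSet s r := by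
  rintro ⟨y, hxy, hyy⟩
  exact hu ⟨y, ReflTransGen.head h hxy, hyy⟩

lemma notMem_step {u : V} (hu : u ∉ noCycleSet s r) :
    ∃ e : E, s e = u ∧ r e ∉ noCycleSet s r := by
  rw [noCycleSet, Set.mem_setOf_eq, not_not] at hu
  obtain ⟨x, hux, hxx⟩ := hu
  rcases hux.cases_head with heq | ⟨b, hub, hbx⟩
  · subst heq
    obtain ⟨b, hub, hbu⟩ := (Relation.TransGen.head'_iff).1 hxx
    obtain ⟨e, he, hre⟩ := hub
    exact ⟨e, he, fun hb => hb ⟨u, hre ▸ hbu, hxx⟩⟩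
  · obtain ⟨e, he, hre⟩ := hub
    exact ⟨e, he, fun hb => hb ⟨x, hre ▸ hbx, hxx⟩⟩

/-- successor relation: `a` is an out-neighbour of `b ∈ S`. -/
def succRel (a b : V) : Prop := b ∈ noCycleSet s r ∧ eRel s r b a

/-- predecessor relation: `a ∈ S` and there is an edge from `a` to `b`. -/
def predRel (a b : V) : Prop := a ∈ noCycleSet s r ∧ eRel s r a b

lemma wf_succRel : WellFounded (succRel s r) := by
  have h : WellFounded (fun a b : V => b ∈ noCycleSet s r ∧ TransGen (eRel s r) b a) := by
    letI : IsTrans V (fun a b : V => b ∈ noCycleSet s r ∧ TransGen (eRel s r) b a) :=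
      ⟨fun a b c hab hbc => ⟨hbc.1, hbc.2.trans hab.2⟩⟩
    letI : IsIrrefl V (fun a b : V => b ∈ noCycleSet s r ∧ TransGen (eRel s r) b a) :=
      ⟨fun a ha => ha.1 ⟨a, ReflTransGen.refl, ha.2⟩⟩
    exact Finite.wellFounded_of_trans_of_irrefl _
  exact Subrelation.wf (fun {a b} hab => ⟨hab.1, TransGen.single hab.2⟩) h

lemma wf_predRel : WellFounded (predRel s r) := by
  have h : WellFounded (fun a b : V => a ∈ noCycleSet s r ∧ TransGen (eRel s r) a b) := by
    letI : IsTrans V (fun a b : V => a ∈ noCycleSet s r ∧ TransGen (eRel s r) a b) :=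
      ⟨fun a b c hab hbc => ⟨hab.1, hab.2.trans hbc.2⟩⟩
    letI : IsIrrefl V (fun a b : V => a ∈ noCycleSet s r ∧ TransGen (eRel s r) a b) :=
      ⟨fun a ha => ha.1 ⟨a, ReflTransGen.refl, ha.2⟩⟩
    exact Finite.wellFounded_of_trans_of_irrefl _
  exact Subrelation.wf (fun {a b} hab => ⟨hab.1, TransGen.single hab.2⟩) h

lemma gMk_rel (u : V) :
    gMk s r w (Finsupp.single u (fwVert s w u)) = gMk s r w (frTrans s r u) :=
  (addConGen (gRel s r w)).eq.2 (AddConGen.Rel.of _ _ ⟨u, rfl, rfl⟩)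

end GMAux

namespace GMAux

open Finsupp Relation

variable {V E : Type} [Fintype V] [Fintype E] [DecidableEq V] (s r : E → V) (w : E → ℕ)

/-- the ℤ-linear "row" of the relation at `u`. -/
noncomputable def rowZ (u : V) : V →₀ ℤ :=
  fwVert s w u • Finsupp.single u 1 -
    ∑ e ∈ Finset.univ.filter (fun e => s e = u), Finsupp.single (r e) 1

open Classical in
/-- rows, restricted to vertices in `S`. -/
noncomputable def rho (u : V) : V →₀ ℤ :=
  if u ∈ noCycleSet s r then rowZ s r w u else 0

/-- the quotient group detecting nontriviality. -/
noncomputable abbrev Gq := (V →₀ ℤ) ⧸ Submodule.span ℤ (Set.range (rho s r w))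

open Classical in
noncomputable def tt (u : V) : WithTop (Gq s r w) :=
  if u ∈ noCycleSet s r
  then ((Submodule.Quotient.mk (Finsupp.single u (1 : ℤ)) : Gq s r w) : WithTop (Gq s r w))
  else ⊤

noncomputable def psi : (V →₀ ℕ) →+ WithTop (Gq s r w) :=
  Finsupp.liftAddHom (fun u => (smulAddHom ℕ (WithTop (Gq s r w))).flip (tt s r w u))

lemma psi_single (u : V) (n : ℕ) : psi s r w (Finsupp.single u n) = n • tt s r w u := by
  simp [psi]

lemma coe_nsmul {G : Type} [AddCommGroup G] (g : G) (n : ℕ) :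
    (n • (g : WithTop G)) = ((n • g : G) : WithTop G) := by
  induction n with
  | zero => simp
  | succ k ih => rw [succ_nsmul, succ_nsmul, ih, WithTop.coe_add]

lemma nsmul_top {G : Type} [AddCommGroup G] {n : ℕ} (hn : 0 < n) :
    (n • (⊤ : WithTop G)) = ⊤ := by
  cases n with
  | zero => omega
  | succ k => rw [succ_nsmul]; exact WithTop.add_top _

lemma coe_sum {G : Type} [AddCommGroup G] {ι : Type} (t : Finset ι) (f : ι → G) :
    ((↑(∑ i ∈ t, f i) : WithTop G)) = ∑ i ∈ t, ((f i : WithTop G)) := by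
  classical
  induction t using Finset.induction with
  | empty => simp
  | @insert a t h ih => rw [Finset.sum_insert h, Finset.sum_insert h, WithTop.coe_add, ih]

lemma psi_frTrans (u : V) :
    psi s r w (frTrans s r u) =
      ∑ e ∈ Finset.univ.filter (fun e => s e = u), tt s r w (r e) := by
  rw [frTrans, map_sum]
  exact Finset.sum_congr rfl fun e _ => by rw [psi_single, one_nsmul]

lemma psi_respects : ∀ a b : V →₀ ℕ, gRel s r w a b → psi s r w a = psi s r w b := by
  rintro a b ⟨u, rfl, rfl⟩
  rw [psi_single, psi_frTrans]
  by_cases hu : u ∈ noCycleSet s r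
  · have ht : tt s r w u =
        ((Submodule.Quotient.mk (Finsupp.single u (1 : ℤ)) : Gq s r w) : WithTop (Gq s r w)) := by
      rw [tt, if_pos hu]
    rw [ht, coe_nsmul]
    have hre : ∀ e ∈ Finset.univ.filter (fun e => s e = u), tt s r w (r e) =
        ((Submodule.Quotient.mk (Finsupp.single (r e) (1 : ℤ)) : Gq s r w) : WithTop (Gq s r w)) := by
      intro e he
      have hse : s e = u := (Finset.mem_filter.1 he).2
      have : r e ∈ noCycleSet s r := step_mem s r hu ⟨e, hse, rfl⟩
      rw [tt, if_pos this]
    rw [Finset.sum_congr rfl hre, ← coe_sum, WithTop.coe_inj]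
    simp only [← Submodule.mkQ_apply, ← map_sum, ← map_nsmul]
    rw [Submodule.mkQ_apply, Submodule.mkQ_apply, Submodule.Quotient.eq]
    have : fwVert s w u • Finsupp.single u (1:ℤ) -
        (∑ e ∈ Finset.univ.filter (fun e => s e = u), Finsupp.single (r e) (1:ℤ)) = rho s r w u := by
      rw [rho, if_pos hu, rowZ]
    rw [this]
    exact Submodule.subset_span ⟨u, rfl⟩
  · classical
    have ht : tt s r w u = ⊤ := by rw [tt, if_neg hu]
    rw [ht, nsmul_top (one_le_fwVert s w u)]
    obtain ⟨e, hse, hre⟩ := notMem_step s r hu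
    have hmem : e ∈ Finset.univ.filter (fun e => s e = u) := by
      simp [hse]
    rw [← Finset.add_sum_erase _ _ hmem]
    have : tt s r w (r e) = ⊤ := by rw [tt, if_neg hre]
    rw [this, WithTop.top_add]

end GMAux

namespace GMAux
variable {V E : Type} [Fintype V] [Fintype E] [DecidableEq V] (s r : E → V) (w : E → ℕ)

lemma gMk_nsmul (n : ℕ) (a : V →₀ ℕ) : gMk s r w (n • a) = n • gMk s r w a :=
  map_nsmul ((addConGen (gRel s r w)).mk') n a

lemma gMk_sum {ι : Type} (t : Finset ι) (f : ι → V →₀ ℕ) :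
    gMk s r w (∑ i ∈ t, f i) = ∑ i ∈ t, gMk s r w (f i) :=
  map_sum ((addConGen (gRel s r w)).mk') f t

lemma psi_congr {a b : V →₀ ℕ} (h : (addConGen (gRel s r w)) a b) :
    psi s r w a = psi s r w b :=
  (AddCon.ker_rel _).1 <|
    AddCon.le_def.1 (AddCon.addConGen_le.2
      (fun x y hxy => (AddCon.ker_rel (psi s r w)).2 (psi_respects s r w x y hxy))) h

lemma single_eq_nsmul (u : V) (n : ℕ) :
    Finsupp.single u n = n • Finsupp.single u 1 := by
  rw [Finsupp.smul_single, smul_eq_mul, mul_one]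

lemma exists_nsmul_gMk_eq_zero (u : V) (hu : u ∈ noCycleSet s r) :
    ∃ n : ℕ, 0 < n ∧ n • gMk s r w (Finsupp.single u 1) = 0 := by
  classical
  revert hu
  refine (wf_succRel s r).induction
    (C := fun u => u ∈ noCycleSet s r →
      ∃ n : ℕ, 0 < n ∧ n • gMk s r w (Finsupp.single u 1) = 0) u ?_
  intro u IH hu
  have hrel := gMk_rel s r w u
  rw [single_eq_nsmul, gMk_nsmul, frTrans, gMk_sum] at hrel
  have H : ∀ e : E, ∃ n : ℕ, 0 < n ∧ (s e = u → n • gMk s r w (Finsupp.single (r e) 1) = 0) := by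
    intro e
    by_cases hse : s e = u
    · obtain ⟨n, hn, hz⟩ := IH (r e) ⟨hu, e, hse, rfl⟩ (step_mem s r hu ⟨e, hse, rfl⟩)
      exact ⟨n, hn, fun _ => hz⟩
    · exact ⟨1, one_pos, fun h => absurd h hse⟩
  choose n hnpos hnz using H
  refine ⟨fwVert s w u * ∏ e : E, n e, ?_, ?_⟩
  · exact Nat.mul_pos (one_le_fwVert s w u) (Finset.prod_pos fun e _ => hnpos e)
  · rw [mul_nsmul, hrel, Finset.smul_sum]
    refine Finset.sum_eq_zero fun e he => ?_
    have hse : s e = u := (Finset.mem_filter.1 he).2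
    obtain ⟨c, hc⟩ := Finset.dvd_prod_of_mem n (Finset.mem_univ e)
    rw [hc, mul_nsmul, hnz e hse, nsmul_zero]

lemma gMk_single_eq_zero (hcond : ∀ v ∈ noCycleSet s r, (∃ e : E, s e = v) → fwVert s w v = 1)
    (u : V) (hu : u ∈ noCycleSet s r) : gMk s r w (Finsupp.single u 1) = 0 := by
  classical
  revert hu
  refine (wf_succRel s r).induction
    (C := fun u => u ∈ noCycleSet s r → gMk s r w (Finsupp.single u 1) = 0) u ?_
  intro u IH hu
  have hfw : fwVert s w u = 1 := by
    by_cases hs : ∃ e : E, s e = u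
    · exact hcond u hu hs
    · rw [fwVert]
      have hempty : Finset.univ.filter (fun e : E => s e = u) = ∅ :=
        Finset.filter_eq_empty_iff.2 (fun {e} _ h => hs ⟨e, h⟩)
      rw [hempty, Finset.sup_empty]
      simp
  have hrel := gMk_rel s r w u
  rw [hfw] at hrel
  rw [hrel, frTrans, gMk_sum]
  refine Finset.sum_eq_zero fun e he => ?_
  have hse : s e = u := (Finset.mem_filter.1 he).2
  exact IH (r e) ⟨hu, e, hse, rfl⟩ (step_mem s r hu ⟨e, hse, rfl⟩)

lemma fwVert_eq_one_of_mem_span (v : V) (hv : v ∈ noCycleSet s r)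
    (h : Finsupp.single v (1 : ℤ) ∈ Submodule.span ℤ (Set.range (rho s r w))) :
    fwVert s w v = 1 := by
  classical
  obtain ⟨lam, hlam⟩ := (Submodule.mem_span_range_iff_exists_fun ℤ).1 h
  set D : Finset V := Finset.univ.filter (fun u => lam u ≠ 0 ∧ u ∈ noCycleSet s r) with hD
  have hsum : ∑ u ∈ D, lam u • rowZ s r w u = Finsupp.single v 1 := by
    have h0 : ∀ u ∈ Finset.univ, u ∉ D → lam u • rho s r w u = 0 := by
      intro u _ hu
      rw [hD, Finset.mem_filter] at hu
      push_neg at hu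
      by_cases hl : lam u = 0
      · rw [hl, zero_smul]
      · rw [rho, if_neg (hu (Finset.mem_univ u) hl), smul_zero]
    have hss := Finset.sum_subset (Finset.subset_univ D) h0
    rw [← hlam, ← hss]
    refine Finset.sum_congr rfl fun u hu => ?_
    rw [hD, Finset.mem_filter] at hu
    rw [rho, if_pos hu.2.2]
  have hDne : D.Nonempty := by
    by_contra hne
    rw [Finset.not_nonempty_iff_eq_empty] at hne
    rw [hne, Finset.sum_empty] at hsum
    have := congrArg (fun f : V →₀ ℤ => f v) hsum
    simp at this
  obtain ⟨u₀, hu₀D, hmin⟩ := (wf_predRel s r).has_min ↑D (Finset.coe_nonempty.2 hDne)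
  have hu₀D' : u₀ ∈ D := Finset.mem_coe.1 hu₀D
  have hu₀S : u₀ ∈ noCycleSet s r := (Finset.mem_filter.1 hu₀D').2.2
  have hlam₀ : lam u₀ ≠ 0 := (Finset.mem_filter.1 hu₀D').2.1
  have hnoedge : ∀ u ∈ D, ∀ e : E, s e = u → r e ≠ u₀ := by
    intro u hu e hse hre
    exact hmin u (Finset.mem_coe.2 hu) ⟨(Finset.mem_filter.1 hu).2.2, e, hse, hre⟩
  have hrow : ∀ u ∈ D, (rowZ s r w u) u₀ = (fwVert s w u : ℤ) * (if u = u₀ then 1 else 0) := by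
    intro u hu
    rw [rowZ, Finsupp.sub_apply, Finsupp.smul_apply, Finsupp.finset_sum_apply]
    have hz : ∑ e ∈ Finset.univ.filter (fun e => s e = u), (Finsupp.single (r e) (1:ℤ)) u₀ = 0 := by
      refine Finset.sum_eq_zero fun e he => ?_
      have hse : s e = u := (Finset.mem_filter.1 he).2
      rw [Finsupp.single_apply, if_neg (hnoedge u hu e hse)]
    rw [hz, sub_zero, Finsupp.single_apply, nsmul_eq_mul]
  have heval := congrArg (fun f : V →₀ ℤ => f u₀) hsum
  simp only [Finsupp.finset_sum_apply, Finsupp.smul_apply] at heval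
  have hsum2 : ∑ u ∈ D, lam u • ((rowZ s r w u) u₀) = lam u₀ * (fwVert s w u₀ : ℤ) := by
    have hterm : ∀ u ∈ D, lam u • ((rowZ s r w u) u₀) =
        if u = u₀ then lam u * (fwVert s w u : ℤ) else 0 := by
      intro u hu
      rw [hrow u hu, smul_eq_mul]
      by_cases h : u = u₀ <;> simp [h]
    rw [Finset.sum_congr rfl hterm,
      Finset.sum_ite_eq' D u₀ (fun u => lam u * (fwVert s w u : ℤ)), if_pos hu₀D']
  rw [hsum2, Finsupp.single_apply] at heval
  by_cases hvu : v = u₀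
  · subst hvu
    rw [if_pos rfl] at heval
    have hdvd : (fwVert s w v : ℤ) ∣ 1 := ⟨lam v, by rw [mul_comm]; exact heval.symm⟩
    have : (fwVert s w v : ℤ) ∣ ((1 : ℕ) : ℤ) := by exact_mod_cast hdvd
    exact Nat.dvd_one.1 (Int.natCast_dvd_natCast.1 this)
  · rw [if_neg hvu] at heval
    rcases mul_eq_zero.1 heval with h | h
    · exact absurd h hlam₀
    · have hp : (0:ℕ) < fwVert s w u₀ := GMAux.one_le_fwVert s w u₀
      exact absurd h (by exact_mod_cast hp.ne')

end GMAux


/-- For a finite weighted graph `(E,w)` with `S` the set of vertices not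
connecting to any cycle, `M(E,w)` is conical if and only if every non-sink
vertex in `S` has weight one. -/
theorem graphMonoid_conical_iff {V E : Type} [Fintype V] [Fintype E] [DecidableEq V]
    (s r : E → V) (w : E → ℕ) (hw : ∀ e : E, 0 < w e) :
    (∀ x y : graphMonoid s r w, x + y = 0 → x = 0 ∧ y = 0) ↔
      ∀ v ∈ noCycleSet s r, (∃ e : E, s e = v) → fwVert s w v = 1 := by
  classical
  constructor
  · intro hcon v hvS _
    obtain ⟨n, hnpos, hz⟩ := GMAux.exists_nsmul_gMk_eq_zero s r w v hvS
    have hv0 : gMk s r w (Finsupp.single v 1) = 0 := by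
      cases n with
      | zero => omega
      | succ m =>
        rw [succ_nsmul] at hz
        exact (hcon _ _ hz).2
    have hrel : (addConGen (gRel s r w)) (Finsupp.single v 1) 0 :=
      (addConGen (gRel s r w)).eq.1
        (hv0.trans (map_zero ((addConGen (gRel s r w)).mk')).symm)
    have hψ := GMAux.psi_congr s r w hrel
    rw [map_zero, GMAux.psi_single, one_nsmul, GMAux.tt, if_pos hvS] at hψ
    have hq : (Submodule.Quotient.mk (Finsupp.single v (1:ℤ)) : GMAux.Gq s r w) = 0 := by
      exact_mod_cast hψ
    exact GMAux.fwVert_eq_one_of_mem_span s r w v hvS ((Submodule.Quotient.mk_eq_zero _).1 hq)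
  · intro hcond x y hxy
    obtain ⟨a, rfl⟩ := AddCon.mk'_surjective x
    obtain ⟨b, rfl⟩ := AddCon.mk'_surjective y
    have hab : (addConGen (gRel s r w)) (a + b) 0 := by
      rw [← map_add] at hxy
      exact (addConGen (gRel s r w)).eq.1
        (hxy.trans (map_zero ((addConGen (gRel s r w)).mk')).symm)
    have hψ := GMAux.psi_congr s r w hab
    rw [map_zero, map_add] at hψ
    have hne : GMAux.psi s r w a ≠ ⊤ ∧ GMAux.psi s r w b ≠ ⊤ := by
      rw [← WithTop.add_ne_top, hψ]
      simp
    have hsupp : ∀ c : V →₀ ℕ, GMAux.psi s r w c ≠ ⊤ → gMk s r w c = 0 := by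
      intro c hc
      have hcs : c = ∑ x ∈ c.support, Finsupp.single x (c x) := (Finsupp.sum_single c).symm
      have hsub : ∀ u ∈ c.support, u ∈ noCycleSet s r := by
        intro u hu
        by_contra hus
        apply hc
        rw [hcs, map_sum, ← Finset.add_sum_erase _ _ hu, GMAux.psi_single, GMAux.tt,
          if_neg hus, GMAux.nsmul_top (Nat.pos_of_ne_zero (Finsupp.mem_support_iff.1 hu)),
          WithTop.top_add]
      rw [hcs, GMAux.gMk_sum]
      refine Finset.sum_eq_zero fun u hu => ?_
      rw [GMAux.single_eq_nsmul, GMAux.gMk_nsmul,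
        GMAux.gMk_single_eq_zero s r w hcond u (hsub u hu), nsmul_zero]
    exact ⟨hsupp a hne.1, hsupp b hne.2⟩
end

section
/- Reduction uniqueness for sandpile monoids: let E be a sandpile graph with sink s, equipped with the balanced weighting w(v) = |s⁻¹(v)| for non-sink vertices. Under the reduction system on the free commutative monoid F_E replacing w(v)·v by Σ_{e ∈ s⁻¹(v)} r(e), every element of F_E is reduction-finite and reduction-unique (i.e., every maximal sequence of reductions terminates and all terminal reductions of a given element coincide). -/
/-- The out-degree `|s⁻¹(v)|` of a vertex. -/
def outdeg {V E : Type} [Fintype E] [DecidableEq V] (s : E → V) (v : V) : ℕ :=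
  (Finset.univ.filter (fun e => s e = v)).card

/-- The sandpile (balanced-weight) one-step reduction on the free commutative
monoid `V →₀ ℕ`: for a non-sink vertex `v`, replace `|s⁻¹(v)|·v` by
`Σ_{e ∈ s⁻¹(v)} r(e)`. -/
noncomputable def spStep {V E : Type} [Fintype E] [DecidableEq V] (s r : E → V)
    (a b : V →₀ ℕ) : Prop :=
  ∃ (v : V) (c : V →₀ ℕ), (∃ e : E, s e = v) ∧
    a = c + Finsupp.single v (outdeg s v) ∧ b = c + frTrans s r v


set_option linter.unusedSectionVars false
set_option linter.unusedVariables false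

section Aux
variable {V E : Type} [Fintype V] [Fintype E] [DecidableEq V] (s r : E → V)

lemma sp_total_single (x : V) (n : ℕ) : ∑ u, (Finsupp.single x n) u = n := by
  simp [Finsupp.single_apply]

lemma sp_total_add (a b : V →₀ ℕ) : ∑ u, (a + b) u = (∑ u, a u) + ∑ u, b u := by
  simp [Finset.sum_add_distrib]

lemma sp_frTrans_apply (v u : V) :
    frTrans s r v u = ∑ e ∈ Finset.univ.filter (fun e => s e = v), (Finsupp.single (r e) 1) u := by
  simp [frTrans]

lemma sp_total_frTrans (v : V) : ∑ u, (frTrans s r v) u = outdeg s v := by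
  simp only [sp_frTrans_apply]
  rw [Finset.sum_comm]
  simp [sp_total_single, outdeg]

lemma sp_frTrans_ge (e : E) (v : V) (h : s e = v) : 1 ≤ frTrans s r v (r e) := by
  rw [sp_frTrans_apply]
  have : (Finsupp.single (r e) 1 : V →₀ ℕ) (r e) = 1 := Finsupp.single_eq_same
  calc (1:ℕ) = (Finsupp.single (r e) 1 : V →₀ ℕ) (r e) := this.symm
    _ ≤ _ := Finset.single_le_sum (f := fun e' => (Finsupp.single (r e') 1 : V →₀ ℕ) (r e))
      (fun _ _ => Nat.zero_le _) (by simp [h])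

lemma sp_le_total (a : V →₀ ℕ) (u : V) : a u ≤ ∑ w, a w :=
  Finset.single_le_sum (fun i _ => Nat.zero_le _) (Finset.mem_univ u)

end Aux

section Main
variable {V E : Type} [Fintype V] [Fintype E] [DecidableEq V] (s r : E → V)

lemma sp_diamond : ∀ a b c, spStep s r a b → spStep s r a c →
    ∃ d, Relation.ReflGen (spStep s r) b d ∧ Relation.ReflTransGen (spStep s r) c d := by
  rintro a b c ⟨v, c1, hev, ha1, rfl⟩ ⟨w, c2, hew, ha2, rfl⟩
  by_cases hvw : v = w
  · subst hvw
    have : c1 = c2 := add_right_cancel (ha1.symm.trans ha2)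
    subst this
    exact ⟨c1 + frTrans s r v, Relation.ReflGen.refl, Relation.ReflTransGen.refl⟩
  · have key : c1 + Finsupp.single v (outdeg s v) = c2 + Finsupp.single w (outdeg s w) :=
      ha1.symm.trans ha2
    have h1w : Finsupp.single w (outdeg s w) ≤ c1 := by
      rw [Finsupp.single_le_iff]
      have := DFunLike.congr_fun key w
      simp only [Finsupp.add_apply] at this
      rw [Finsupp.single_apply, if_neg hvw, Finsupp.single_apply, if_pos rfl] at this
      omega
    have h2v : Finsupp.single v (outdeg s v) ≤ c2 := by
      rw [Finsupp.single_le_iff]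
      have := DFunLike.congr_fun key v
      simp only [Finsupp.add_apply] at this
      rw [Finsupp.single_apply, if_pos rfl, Finsupp.single_apply, if_neg (Ne.symm hvw)] at this
      omega
    set c1' := c1 - Finsupp.single w (outdeg s w) with hc1'
    set c2' := c2 - Finsupp.single v (outdeg s v) with hc2'
    have e1 : c1' + Finsupp.single w (outdeg s w) = c1 := tsub_add_cancel_of_le h1w
    have e2 : c2' + Finsupp.single v (outdeg s v) = c2 := tsub_add_cancel_of_le h2v
    have hcc : c1' = c2' := by
      have : c1' + (Finsupp.single w (outdeg s w) + Finsupp.single v (outdeg s v))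
           = c2' + (Finsupp.single w (outdeg s w) + Finsupp.single v (outdeg s v)) := by
        calc c1' + (Finsupp.single w (outdeg s w) + Finsupp.single v (outdeg s v))
            = c1 + Finsupp.single v (outdeg s v) := by rw [← e1]; abel
          _ = c2 + Finsupp.single w (outdeg s w) := key
          _ = c2' + (Finsupp.single w (outdeg s w) + Finsupp.single v (outdeg s v)) := by
              rw [← e2]; abel
      exact add_right_cancel this
    refine ⟨c1' + frTrans s r v + frTrans s r w, Relation.ReflGen.single ?_,
      Relation.ReflTransGen.single ?_⟩
    · exact ⟨w, c1' + frTrans s r v, hew, by rw [← e1]; abel, rfl⟩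
    · refine ⟨v, c2' + frTrans s r w, hev, by rw [← e2]; abel, ?_⟩
      rw [hcc]; abel

end Main

section Main2
variable {V E : Type} [Fintype V] [Fintype E] [DecidableEq V] (s r : E → V)

lemma sp_terminates (σ : V) (hsink : ¬ ∃ e : E, s e = σ)
    (hconn : ∀ v : V, Relation.ReflTransGen (eRel s r) v σ) :
    ¬ ∃ f : ℕ → (V →₀ ℕ), ∀ m : ℕ, spStep s r (f m) (f (m + 1)) := by
  rintro ⟨f, hf⟩
  choose v c he h1 h2 using hf
  have heq : ∀ m, f (m+1) + Finsupp.single (v m) (outdeg s (v m)) = f m + frTrans s r (v m) := by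
    intro m; rw [h1 m, h2 m]; abel
  have hpt : ∀ m u, f (m+1) u + (Finsupp.single (v m) (outdeg s (v m)) : V →₀ ℕ) u
      = f m u + frTrans s r (v m) u := by
    intro m u
    have := DFunLike.congr_fun (heq m) u
    simpa using this
  set N := ∑ u, f 0 u with hN
  have htot : ∀ m, ∑ u, f m u = N := by
    intro m; induction m with
    | zero => rfl
    | succ m ih =>
      have := congrArg (fun a : V →₀ ℕ => ∑ u, a u) (heq m)
      simp only [sp_total_add, sp_total_single, sp_total_frTrans] at this
      omega
  have hbd : ∀ m u, f m u ≤ N := fun m u => (sp_le_total (f m) u).trans_eq (htot m)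
  have step : ∀ x y, {m | v m = x}.Infinite → eRel s r x y → {m | v m = y}.Infinite := by
    intro x y hx hxy
    obtain ⟨e, hse, hre⟩ := hxy
    by_cases hxyeq : x = y
    · subst hxyeq; exact hx
    by_contra hy
    rw [Set.not_infinite] at hy
    obtain ⟨M, hM⟩ := hy.bddAbove
    have hMy : ∀ m, M + 1 ≤ m → v m ≠ y := by
      intro m hm hvm
      have := hM hvm
      omega
    have mono : ∀ m, M + 1 ≤ m → f m y ≤ f (m+1) y := by
      intro m hm
      have h := hpt m y
      rw [Finsupp.single_apply, if_neg (hMy m hm)] at h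
      omega
    have mono' : ∀ m n, M + 1 ≤ m → m ≤ n → f m y ≤ f n y := by
      intro m n hm hmn
      induction n, hmn using Nat.le_induction with
      | base => exact le_refl _
      | succ n hmn ih => exact ih.trans (mono n (by omega))
    have strict : ∀ m, M + 1 ≤ m → v m = x → f m y + 1 ≤ f (m+1) y := by
      intro m hm hvm
      have h := hpt m y
      rw [Finsupp.single_apply, if_neg (hMy m hm)] at h
      have h2 : 1 ≤ frTrans s r (v m) y := by
        rw [hvm, ← hre]; exact sp_frTrans_ge s r e x hse
      omega
    have unb : ∀ k : ℕ, ∃ m, M + 1 ≤ m ∧ k ≤ f m y := by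
      intro k; induction k with
      | zero => exact ⟨M+1, le_refl _, Nat.zero_le _⟩
      | succ k ih =>
        obtain ⟨m, hm, hk⟩ := ih
        obtain ⟨m', hm', hmm'⟩ := hx.exists_gt m
        refine ⟨m' + 1, by omega, ?_⟩
        have hs := strict m' (by omega) hm'
        have hmo := mono' m m' hm (le_of_lt hmm')
        omega
    obtain ⟨m, _, hk⟩ := unb (N+1)
    exact absurd (hbd m y) (by omega)
  obtain ⟨x, hx⟩ := Finite.exists_infinite_fiber v
  have hx' : {m | v m = x}.Infinite := Set.infinite_coe_iff.mp hx
  have hprop : ∀ b, Relation.ReflTransGen (eRel s r) x b → {m | v m = b}.Infinite := by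
    intro b h
    induction h with
    | refl => exact hx'
    | tail h1 h2 ih => exact step _ _ ih h2
  obtain ⟨m, hm⟩ := (hprop σ (hconn x)).nonempty
  exact hsink (hm ▸ he m)

end Main2

/-- **Reduction uniqueness for sandpile monoids.**  Let `E` be a sandpile graph
(finite, unique sink `σ`, every vertex connects to `σ`) with the balanced
weighting `w(v) = |s⁻¹(v)|`.  Then every element of the free commutative monoid
on the vertices is reduction-finite (there is no infinite sequence of
reductions) and reduction-unique (all of its terminal reducts coincide). -/
theorem sandpile_reduction_unique {V E : Type} [Fintype V] [Fintype E] [DecidableEq V]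
    (s r : E → V) (σ : V)
    (hsink : ¬ ∃ e : E, s e = σ)
    (huniq : ∀ v : V, (¬ ∃ e : E, s e = v) → v = σ)
    (hconn : ∀ v : V, Relation.ReflTransGen (eRel s r) v σ) :
    (¬ ∃ f : ℕ → (V →₀ ℕ), ∀ m : ℕ, spStep s r (f m) (f (m + 1))) ∧
    (∀ a c c' : V →₀ ℕ,
      Relation.ReflTransGen (spStep s r) a c →
      Relation.ReflTransGen (spStep s r) a c' →
      (¬ ∃ d : V →₀ ℕ, spStep s r c d) →
      (¬ ∃ d : V →₀ ℕ, spStep s r c' d) → c = c') := by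
  constructor
  · exact sp_terminates s r σ hsink hconn
  · intro a c c' hac hac' hc hc'
    obtain ⟨d, hcd, hc'd⟩ := Relation.church_rosser (sp_diamond s r) hac hac'
    have h1 : c = d := by
      rcases hcd.cases_head with h | ⟨e, he, _⟩
      · exact h
      · exact absurd ⟨e, he⟩ hc
    have h2 : c' = d := by
      rcases hc'd.cases_head with h | ⟨e, he, _⟩
      · exact h
      · exact absurd ⟨e, he⟩ hc'
    rw [h1, h2]
end

section
/- For a sandpile graph E, the sandpile monoid SP(E) is finite, and its cardinality equals the product over all non-sink vertices v of |s⁻¹(v)|. -/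
/-- The defining relations of the sandpile monoid `SP(E)`:  `s = 0` for the
sink `σ`, and `|s⁻¹(v)|·v = Σ_{e ∈ s⁻¹(v)} r(e)` for each non-sink vertex `v`. -/
def spRel {V E : Type} [Fintype E] [DecidableEq V] (s r : E → V) (σ : V)
    (a b : V →₀ ℕ) : Prop :=
  (∃ v : V, (∃ e : E, s e = v) ∧
      a = Finsupp.single v (outdeg s v) ∧ b = frTrans s r v) ∨
    (a = Finsupp.single σ 1 ∧ b = 0)

/-- The sandpile monoid `SP(E)`: the free commutative monoid on the vertices
modulo the congruence generated by the sandpile relations. -/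
abbrev spMonoid {V E : Type} [Fintype E] [DecidableEq V] (s r : E → V) (σ : V) :=
  (addConGen (spRel s r σ)).Quotient

/-! ### Auxiliary development -/

namespace SandpileAux

open Finsupp Relation

variable {V E : Type} [Fintype V] [Fintype E] [DecidableEq V] (s r : E → V) (σ : V)

/-- One rewriting step: topple an unstable vertex, or remove a chip from the sink. -/
def Step (f g : V →₀ ℕ) : Prop :=
  (∃ (v : V) (h : V →₀ ℕ), (∃ e : E, s e = v) ∧
      f = h + Finsupp.single v (outdeg s v) ∧ g = h + frTrans s r v) ∨
    (∃ h : V →₀ ℕ, f = h + Finsupp.single σ 1 ∧ g = h)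

variable {s r σ}

/-- The total-mass homomorphism. -/
noncomputable def mass : (V →₀ ℕ) →+ ℕ := Finsupp.liftAddHom (fun _ => AddMonoidHom.id ℕ)

@[simp] lemma mass_single (v : V) (n : ℕ) : mass (Finsupp.single v n) = n := by
  simp [mass, Finsupp.liftAddHom_apply_single]

lemma mass_frTrans (v : V) : mass (frTrans s r v) = outdeg s v := by
  rw [frTrans, map_sum, outdeg]
  simp

lemma apply_le_mass (g : V →₀ ℕ) (v : V) : g v ≤ mass g := by
  rw [mass, Finsupp.liftAddHom_apply]
  by_cases h : v ∈ g.support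
  · exact Finset.single_le_sum (f := fun i => g i) (fun _ _ => Nat.zero_le _) h
  · simp [Finsupp.notMem_support_iff.mp h]

lemma frTrans_apply (v u : V) :
    frTrans s r v u =
      ((Finset.univ.filter (fun e => s e = v)).filter (fun e => r e = u)).card := by
  classical
  rw [frTrans, Finsupp.finset_sum_apply, Finset.card_filter]
  refine Finset.sum_congr rfl fun e _ => by simp [Finsupp.single_apply]

lemma frTrans_apply_pos {v u : V} (h : eRel s r v u) : 1 ≤ frTrans s r v u := by
  obtain ⟨e, he1, he2⟩ := h
  rw [frTrans_apply]
  refine Finset.card_pos.mpr ⟨e, ?_⟩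
  simp [he1, he2]

lemma exists_decomp {g : V →₀ ℕ} {v : V} {n : ℕ} (h : n ≤ g v) :
    ∃ h' : V →₀ ℕ, g = h' + Finsupp.single v n := by
  obtain ⟨c, hc⟩ := le_iff_exists_add.mp (Finsupp.single_le_iff.mpr h)
  exact ⟨c, by rw [hc, add_comm]⟩

lemma swap_decomp {h₁ h₂ : V →₀ ℕ} {u v : V} {n k : ℕ} (huv : u ≠ v)
    (heq : h₁ + Finsupp.single v n = h₂ + Finsupp.single u k) :
    ∃ d : V →₀ ℕ, h₁ = d + Finsupp.single u k ∧ h₂ = d + Finsupp.single v n := by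
  have h0 : k ≤ h₁ u := by
    have hvu : v ≠ u := fun hh => huv hh.symm
    have h' := congrArg (fun f : V →₀ ℕ => f u) heq
    simp only [Finsupp.add_apply, Finsupp.single_apply] at h'
    rw [if_neg hvu] at h'
    simp at h'
    omega
  obtain ⟨d, hd⟩ := exists_decomp h0
  refine ⟨d, hd, ?_⟩
  have : h₂ + Finsupp.single u k = (d + Finsupp.single v n) + Finsupp.single u k := by
    rw [← heq, hd]; abel
  exact add_right_cancel this

lemma step_add {f g : V →₀ ℕ} (h : Step s r σ f g) (c : V →₀ ℕ) :
    Step s r σ (f + c) (g + c) := by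
  rcases h with ⟨v, h', he, hf, hg⟩ | ⟨h', hf, hg⟩
  · exact Or.inl ⟨v, h' + c, he, by rw [hf]; abel, by rw [hg]; abel⟩
  · exact Or.inr ⟨h' + c, by rw [hf]; abel, by rw [hg]⟩

lemma rtg_add {f g : V →₀ ℕ} (h : ReflTransGen (Step s r σ) f g) (c : V →₀ ℕ) :
    ReflTransGen (Step s r σ) (f + c) (g + c) := by
  induction h with
  | refl => exact ReflTransGen.refl
  | tail _ hbc ih => exact ih.tail (step_add hbc c)

lemma step_diamond (hsink : ¬∃ e : E, s e = σ) {f g₁ g₂ : V →₀ ℕ}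
    (h1 : Step s r σ f g₁) (h2 : Step s r σ f g₂) :
    g₁ = g₂ ∨ ∃ d, Step s r σ g₁ d ∧ Step s r σ g₂ d := by
  rcases h1 with ⟨v, h₁, he1, hf1, hg1⟩ | ⟨h₁, hf1, hg1⟩ <;>
    rcases h2 with ⟨u, h₂, he2, hf2, hg2⟩ | ⟨h₂, hf2, hg2⟩
  · by_cases hvu : v = u
    · subst hvu
      left
      have : h₁ = h₂ := add_right_cancel (hf1.symm.trans hf2)
      rw [hg1, hg2, this]
    · right
      obtain ⟨d, hd1, hd2⟩ := swap_decomp (Ne.symm hvu) (hf1.symm.trans hf2)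
      refine ⟨d + frTrans s r v + frTrans s r u, Or.inl ⟨u, d + frTrans s r v, he2, ?_, rfl⟩,
        Or.inl ⟨v, d + frTrans s r u, he1, ?_, by abel⟩⟩
      · rw [hg1, hd1]; abel
      · rw [hg2, hd2]; abel
  · -- topple at v / sink removal
    right
    have hvσ : v ≠ σ := fun h => hsink (h ▸ he1)
    obtain ⟨d, hd1, hd2⟩ := swap_decomp (Ne.symm hvσ) (hf1.symm.trans hf2)
    refine ⟨d + frTrans s r v, Or.inr ⟨d + frTrans s r v, ?_, rfl⟩,
      Or.inl ⟨v, d, he1, hg2.trans hd2, rfl⟩⟩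
    · rw [hg1, hd1]; abel
  · right
    have hvσ : u ≠ σ := fun h => hsink (h ▸ he2)
    obtain ⟨d, hd1, hd2⟩ := swap_decomp (Ne.symm hvσ) (hf2.symm.trans hf1)
    refine ⟨d + frTrans s r u, Or.inl ⟨u, d, he2, hg1.trans hd2, rfl⟩,
      Or.inr ⟨d + frTrans s r u, ?_, rfl⟩⟩
    · rw [hg2, hd1]; abel
  · left
    have : h₁ = h₂ := add_right_cancel (hf1.symm.trans hf2)
    rw [hg1, hg2, this]

lemma step_confluent (hsink : ¬∃ e : E, s e = σ) :
    ∀ a b c : V →₀ ℕ, Step s r σ a b → Step s r σ a c →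
      ∃ d, ReflGen (Step s r σ) b d ∧ ReflTransGen (Step s r σ) c d := by
  intro a b c h1 h2
  rcases step_diamond hsink h1 h2 with h | ⟨d, hd1, hd2⟩
  · exact ⟨b, ReflGen.refl, h ▸ ReflTransGen.refl⟩
  · exact ⟨d, ReflGen.single hd1, ReflTransGen.single hd2⟩

lemma sum_bump (T : V → ℕ) (v : V) (X : V → (V →₀ ℕ)) :
    ∑ w, (T w + if w = v then 1 else 0) • X w = (∑ w, T w • X w) + X v := by
  simp [add_smul, Finset.sum_add_distrib, ite_smul]

/-- The toppling-count invariant along a reduction sequence. -/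
lemma rtg_count {f g : V →₀ ℕ} (h : ReflTransGen (Step s r σ) f g) :
    ∃ (T : V → ℕ) (m : ℕ), (∀ v, T v ≠ 0 → ∃ e : E, s e = v) ∧
      f + ∑ v, T v • frTrans s r v =
        g + (∑ v, T v • Finsupp.single v (outdeg s v)) + m • Finsupp.single σ 1 := by
  induction h with
  | refl => exact ⟨fun _ => 0, 0, fun v hv => absurd rfl hv, by simp⟩
  | tail _ hbc ih =>
    obtain ⟨T, m, hT, heq⟩ := ih
    rcases hbc with ⟨v, h', he, hb, hc⟩ | ⟨h', hb, hc⟩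
    · refine ⟨fun w => T w + if w = v then 1 else 0, m, ?_, ?_⟩
      · intro w hw
        by_cases hwv : w = v
        · exact hwv ▸ he
        · exact hT w (by simpa [hwv] using hw)
      · rw [sum_bump, sum_bump, ← add_assoc, heq, hb, hc]
        abel
    · refine ⟨T, m + 1, hT, ?_⟩
      rw [heq, hb, hc, succ_nsmul]
      abel

/-- The heart of termination: the toppling counts of a closed cycle of
reductions must vanish. -/
lemma count_eq_zero (hsink : ¬∃ e : E, s e = σ)
    (hconn : ∀ v : V, Relation.ReflTransGen (eRel s r) v σ)
    (T : V → ℕ) (m : ℕ) (hT : ∀ v, T v ≠ 0 → ∃ e : E, s e = v)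
    (heq : ∑ v, T v • frTrans s r v =
      (∑ v, T v • Finsupp.single v (outdeg s v)) + m • Finsupp.single σ 1) :
    T = (fun _ => 0) ∧ m = 0 := by
  -- First, mass gives m = 0.
  have hmass := congrArg mass heq
  rw [map_add, map_sum, map_sum, map_nsmul, mass_single] at hmass
  simp only [map_nsmul, mass_frTrans, mass_single, smul_eq_mul, mul_one] at hmass
  have hm : m = 0 := by omega
  subst hm
  simp only [zero_smul, add_zero] at heq
  -- coordinatewise equation
  have hcoord : ∀ u : V, ∑ w, T w * frTrans s r w u = T u * outdeg s u := by
    intro u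
    have := congrArg (fun f : V →₀ ℕ => f u) heq
    simpa [Finsupp.finset_sum_apply, Finsupp.smul_apply, Finsupp.single_apply,
      mul_ite, Finset.sum_ite_eq'] using this
  -- support is closed under out-edges
  have hclosed : ∀ v u : V, T v ≠ 0 → eRel s r v u → T u ≠ 0 := by
    intro v u hv hedge
    have h1 : 1 ≤ T v * frTrans s r v u :=
      Nat.one_le_iff_ne_zero.mpr (Nat.mul_ne_zero hv (by
        have := frTrans_apply_pos (s := s) (r := r) hedge; omega))
    have h2 : T v * frTrans s r v u ≤ ∑ w, T w * frTrans s r w u :=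
      Finset.single_le_sum (f := fun w => T w * frTrans s r w u)
        (fun _ _ => Nat.zero_le _) (Finset.mem_univ v)
    have := hcoord u
    intro hu
    rw [hu] at this
    omega
  -- σ is not in the support
  have hTσ : T σ = 0 := by
    by_contra h
    exact hsink (hT σ h)
  -- every vertex reaches σ, hence the support is empty
  have hzero : ∀ v : V, T v = 0 := by
    intro v
    have hv := hconn v
    by_contra h
    induction hv using Relation.ReflTransGen.head_induction_on with
    | refl => exact h hTσ
    | head hstep _ ih => exact ih (hclosed _ _ h hstep)
  exact ⟨funext hzero, rfl⟩

lemma no_cycle (hsink : ¬∃ e : E, s e = σ)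
    (hconn : ∀ v : V, Relation.ReflTransGen (eRel s r) v σ)
    {f : V →₀ ℕ} (h : TransGen (Step s r σ) f f) : False := by
  obtain ⟨b, hfb, hbf⟩ := Relation.TransGen.head'_iff.mp h
  obtain ⟨T, m, hT, heq⟩ := rtg_count hbf
  rcases hfb with ⟨v, h', he, hf, hb⟩ | ⟨h', hf, hb⟩
  · -- combined toppling counts: T + δ_v
    rw [hb] at heq
    rw [hf] at heq
    -- h' + frTrans v + Σ T Tr = h' + single v d + Σ T sing + m σ
    have heq2 : frTrans s r v + ∑ w, T w • frTrans s r w =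
        (Finsupp.single v (outdeg s v) + ∑ w, T w • Finsupp.single w (outdeg s w))
          + m • Finsupp.single σ 1 := by
      have : h' + (frTrans s r v + ∑ w, T w • frTrans s r w) =
          h' + ((Finsupp.single v (outdeg s v) + ∑ w, T w • Finsupp.single w (outdeg s w))
            + m • Finsupp.single σ 1) := by
        conv_lhs => rw [← add_assoc]
        rw [heq]; abel
      exact add_left_cancel this
    have key := count_eq_zero hsink hconn (fun w => T w + if w = v then 1 else 0) m
      (fun w hw => by
        by_cases hwv : w = v
        · exact hwv ▸ he
        · exact hT w (by simpa [hwv] using hw))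
      (by rw [sum_bump, sum_bump, add_comm (∑ w, T w • frTrans s r w), heq2]; abel)
    have := congrFun key.1 v
    simp at this
  · rw [hb, hf] at heq
    have heq2 : ∑ w, T w • frTrans s r w =
        (∑ w, T w • Finsupp.single w (outdeg s w)) + (m + 1) • Finsupp.single σ 1 := by
      have : h' + ∑ w, T w • frTrans s r w =
          h' + ((∑ w, T w • Finsupp.single w (outdeg s w)) + (m + 1) • Finsupp.single σ 1) := by
        rw [heq, succ_nsmul]; abel
      exact add_left_cancel this
    exact absurd (count_eq_zero hsink hconn T (m + 1) hT heq2).2 (Nat.succ_ne_zero m)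

lemma mass_step_le {f g : V →₀ ℕ} (h : Step s r σ f g) : mass g ≤ mass f := by
  rcases h with ⟨v, h', _, hf, hg⟩ | ⟨h', hf, hg⟩
  · rw [hf, hg, map_add, map_add, mass_single, mass_frTrans]
  · rw [hf, hg, map_add, mass_single]
    omega

/-- Every configuration reduces to an irreducible one. -/
lemma exists_nf (hsink : ¬∃ e : E, s e = σ)
    (hconn : ∀ v : V, Relation.ReflTransGen (eRel s r) v σ) (f : V →₀ ℕ) :
    ∃ g, ReflTransGen (Step s r σ) f g ∧ ∀ g', ¬ Step s r σ g g' := by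
  set n := mass (V := V) f with hn
  let S := {g : V →₀ ℕ // mass g ≤ n}
  haveI : Finite S := by
    refine Finite.of_injective (fun g (v : V) =>
      (⟨g.1 v, Nat.lt_succ_of_le (le_trans (apply_le_mass g.1 v) g.2)⟩ : Fin (n + 1))) ?_
    intro a b hab
    ext v
    exact congrArg Fin.val (congrFun hab v)
  let R : S → S → Prop := fun a b => Step s r σ b.1 a.1
  haveI : IsTrans S (TransGen R) := ⟨fun _ _ _ h1 h2 => h1.trans h2⟩
  haveI : IsIrrefl S (TransGen R) := by
    refine ⟨fun a ha => no_cycle hsink hconn (f := a.1) ?_⟩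
    have h2 : TransGen (Function.swap (Step s r σ)) a.1 a.1 :=
      Relation.TransGen.lift (fun x : S => x.1) (fun _ _ h => h) a a ha
    exact Relation.transGen_swap.mp h2
  have hwf : WellFounded R :=
    Subrelation.wf (fun {x y} h => TransGen.single h)
      (Finite.wellFounded_of_trans_of_irrefl (TransGen R))
  have main : ∀ a : S, ∃ g, ReflTransGen (Step s r σ) a.1 g ∧ ∀ g', ¬ Step s r σ g g' := by
    intro a
    induction a using WellFounded.induction hwf with
    | _ a ih =>
      by_cases hred : ∃ g', Step s r σ a.1 g'
      · obtain ⟨g', hg'⟩ := hred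
        have hle : mass g' ≤ n := le_trans (mass_step_le hg') a.2
        obtain ⟨g, hg, hirr⟩ := ih ⟨g', hle⟩ hg'
        exact ⟨g, ReflTransGen.head hg' hg, hirr⟩
      · exact ⟨a.1, ReflTransGen.refl, fun g' hg' => hred ⟨g', hg'⟩⟩
  exact main ⟨f, le_of_eq hn.symm⟩

/-- Characterization of irreducible configurations. -/
lemma irred_iff (hsink : ¬∃ e : E, s e = σ) (huniq : ∀ v : V, (¬ ∃ e : E, s e = v) → v = σ)
    (g : V →₀ ℕ) :
    (∀ g', ¬ Step s r σ g g') ↔ (g σ = 0 ∧ ∀ v, v ≠ σ → g v < outdeg s v) := by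
  constructor
  · intro h
    constructor
    · by_contra hσ
      obtain ⟨h', hh⟩ := exists_decomp (Nat.one_le_iff_ne_zero.mpr hσ)
      exact h h' (Or.inr ⟨h', hh, rfl⟩)
    · intro v hv
      by_contra hge
      push_neg at hge
      obtain ⟨h', hh⟩ := exists_decomp hge
      have he : ∃ e : E, s e = v := by
        by_contra hne
        exact hv (huniq v hne)
      exact h (h' + frTrans s r v) (Or.inl ⟨v, h', he, hh, rfl⟩)
  · rintro ⟨h1, h2⟩ g' (⟨v, h', he, hf, hg⟩ | ⟨h', hf, hg⟩)
    · have hvσ : v ≠ σ := fun h => hsink (h ▸ he)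
      have : outdeg s v ≤ g v := by
        rw [hf]; simp [Finsupp.single_apply]
      exact absurd (h2 v hvσ) (not_lt.mpr this)
    · have : 1 ≤ g σ := by
        rw [hf]; simp [Finsupp.single_apply]
      omega

lemma nf_of_rtg {g d : V →₀ ℕ} (hirr : ∀ g', ¬ Step s r σ g g')
    (h : ReflTransGen (Step s r σ) g d) : g = d := by
  rcases h.cases_head with h | ⟨c, hc, _⟩
  · exact h
  · exact absurd hc (hirr c)

/-- The generated congruence coincides with joinability. -/
lemma con_iff (hsink : ¬∃ e : E, s e = σ) (a b : V →₀ ℕ) :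
    addConGen (spRel s r σ) a b ↔ Join (ReflTransGen (Step s r σ)) a b := by
  have hequiv : Equivalence (Join (ReflTransGen (Step s r σ))) :=
    equivalence_join_reflTransGen (step_confluent hsink)
  constructor
  · intro h
    induction h with
    | of x y hxy =>
      rcases hxy with ⟨v, he, hx, hy⟩ | ⟨hx, hy⟩
      · refine ⟨y, ReflTransGen.single ?_, ReflTransGen.refl⟩
        exact Or.inl ⟨v, 0, he, by rw [hx, zero_add], by rw [hy, zero_add]⟩
      · refine ⟨y, ReflTransGen.single ?_, ReflTransGen.refl⟩
        exact Or.inr ⟨0, by rw [hx, zero_add], hy⟩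
    | refl x => exact hequiv.refl x
    | symm _ ih => exact hequiv.symm ih
    | trans _ _ ih1 ih2 => exact hequiv.trans ih1 ih2
    | add _ _ ih1 ih2 =>
      obtain ⟨d1, hw1, hx1⟩ := ih1
      obtain ⟨d2, hw2, hx2⟩ := ih2
      refine ⟨d1 + d2, ?_, ?_⟩
      · exact (rtg_add hw1 _).trans (by
          rw [add_comm d1, add_comm d1 d2]; exact rtg_add hw2 d1)
      · exact (rtg_add hx1 _).trans (by
          rw [add_comm d1, add_comm d1 d2]; exact rtg_add hx2 d1)
  · rintro ⟨d, h1, h2⟩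
    have hstep : ∀ x y : V →₀ ℕ, Step s r σ x y → addConGen (spRel s r σ) x y := by
      rintro x y (⟨v, h', he, hx, hy⟩ | ⟨h', hx, hy⟩)
      · rw [hx, hy]
        exact (addConGen (spRel s r σ)).add ((addConGen (spRel s r σ)).refl h')
          (AddConGen.Rel.of _ _ (Or.inl ⟨v, he, rfl, rfl⟩))
      · rw [hx, hy]
        have : addConGen (spRel s r σ) (Finsupp.single σ 1) 0 :=
          AddConGen.Rel.of _ _ (Or.inr ⟨rfl, rfl⟩)
        have h2 := (addConGen (spRel s r σ)).add ((addConGen (spRel s r σ)).refl h') this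
        simpa using h2
    have hrtg : ∀ x y : V →₀ ℕ, ReflTransGen (Step s r σ) x y →
        addConGen (spRel s r σ) x y := by
      intro x y h
      induction h with
      | refl => exact (addConGen (spRel s r σ)).refl x
      | tail _ hbc ih => exact (addConGen (spRel s r σ)).trans ih (hstep _ _ hbc)
    exact (addConGen (spRel s r σ)).trans (hrtg a d h1)
      ((addConGen (spRel s r σ)).symm (hrtg b d h2))

end SandpileAux

/-- For a sandpile graph `E` (finite, with unique sink `σ` to which every
vertex connects), the sandpile monoid `SP(E)` is finite and its cardinality is
the product of the out-degrees `|s⁻¹(v)|` over all non-sink vertices `v`. -/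
theorem spMonoid_card {V E : Type} [Fintype V] [Fintype E] [DecidableEq V]
    (s r : E → V) (σ : V)
    (hsink : ¬ ∃ e : E, s e = σ)
    (huniq : ∀ v : V, (¬ ∃ e : E, s e = v) → v = σ)
    (hconn : ∀ v : V, Relation.ReflTransGen (eRel s r) v σ) :
    Finite (spMonoid s r σ) ∧
    Nat.card (spMonoid s r σ) =
      ∏ v ∈ Finset.univ.filter (fun v => ∃ e : E, s e = v), outdeg s v := by
  classical
  open SandpileAux in
  -- the set of normal forms
  let NF := {g : V →₀ ℕ // g σ = 0 ∧ ∀ v, v ≠ σ → g v < outdeg s v}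
  -- the map from normal forms to the sandpile monoid
  let φ : NF → spMonoid s r σ := fun g => (addConGen (spRel s r σ)).mk' g.1
  have hφbij : Function.Bijective φ := by
    constructor
    · intro a b hab
      have hcon : addConGen (spRel s r σ) a.1 b.1 := ((addConGen (spRel s r σ)).eq).mp hab
      obtain ⟨d, h1, h2⟩ := (con_iff hsink a.1 b.1).mp hcon
      have ha := nf_of_rtg ((irred_iff hsink huniq a.1).mpr a.2) h1
      have hb := nf_of_rtg ((irred_iff hsink huniq b.1).mpr b.2) h2
      exact Subtype.ext (ha.trans hb.symm)
    · intro x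
      obtain ⟨f, rfl⟩ := AddCon.mk'_surjective x
      obtain ⟨g, hfg, hirr⟩ := exists_nf hsink hconn f
      have hnf := (irred_iff hsink huniq g).mp hirr
      refine ⟨⟨g, hnf⟩, ?_⟩
      show (addConGen (spRel s r σ)).mk' g = (addConGen (spRel s r σ)).mk' f
      exact ((addConGen (spRel s r σ)).eq).mpr ((con_iff hsink g f).mpr ⟨g, Relation.ReflTransGen.refl, hfg⟩)
  -- normal forms are a product of intervals
  have hP : ∀ v : V, (∃ e : E, s e = v) ↔ v ≠ σ := by
    intro v
    constructor
    · rintro he rfl; exact hsink he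
    · intro hv; by_contra hne; exact hv (huniq v hne)
  let ψ : NF ≃ (Π v : {v : V // ∃ e : E, s e = v}, Fin (outdeg s v.1)) :=
    { toFun := fun g v => ⟨g.1 v.1, g.2.2 v.1 ((hP v.1).mp v.2)⟩
      invFun := fun h => ⟨Finsupp.equivFunOnFinite.symm
          (fun v => if hv : ∃ e : E, s e = v then (h ⟨v, hv⟩ : ℕ) else 0), by
        constructor
        · simp only [Finsupp.coe_equivFunOnFinite_symm]
          rw [dif_neg hsink]
        · intro v hv
          simp only [Finsupp.coe_equivFunOnFinite_symm]
          rw [dif_pos ((hP v).mpr hv)]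
          exact (h ⟨v, (hP v).mpr hv⟩).2⟩
      left_inv := by
        intro g
        apply Subtype.ext
        ext v
        simp only [Finsupp.coe_equivFunOnFinite_symm]
        by_cases hv : ∃ e : E, s e = v
        · rw [dif_pos hv]
        · rw [dif_neg hv]
          have := huniq v hv
          rw [this, g.2.1]
      right_inv := by
        intro h
        funext v
        apply Fin.ext
        simp only [Finsupp.coe_equivFunOnFinite_symm]
        rw [dif_pos v.2] }
  have hNFfin : Finite NF := Finite.of_equiv _ ψ.symm
  have hfin : Finite (spMonoid s r σ) := Finite.of_surjective φ hφbij.2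
  refine ⟨hfin, ?_⟩
  have hcard : Nat.card (spMonoid s r σ) = Nat.card NF := (Nat.card_eq_of_bijective φ hφbij).symm
  rw [hcard, Nat.card_congr ψ]
  rw [Nat.card_pi]
  simp only [Nat.card_eq_fintype_card, Fintype.card_fin]
  rw [← Finset.prod_subtype (Finset.univ.filter (fun v => ∃ e : E, s e = v))
    (fun v => by simp) (fun v => outdeg s v)]
end
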